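/- arXiv:1902.02152 — 6 statements merged into one kernel-verified Lean document; each statement's English description precedes it below -/
import Mathlib

section
/- Let G be a group and X → G a function such that the induced homomorphism F → G is surjective but not injective. Then for every i ∈ {1,…,n} and every sign ε ∈ {±1} there exists a nontrivial reduced word r in the alphabet X ∪ X⁻¹ whose first letter is x_i^{−ε}, whose last letter is x_i^{ε}, and which satisfies r =_G 1. -/
/-- Words in the alphabet `X ∪ X⁻¹` with `X = {x_1, …, x_n}` are lists of letters `(i, b)`,
the letter `(i, b)` being `x_i` if `b = true` and `x_i⁻¹` if `b = false` (so the inverse of the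
letter `(i, b)` is `(i, !b)`).  `evalWord φ w` is the image of the word `w` in `G` under the
homomorphism `F(X) → G` induced by `φ : X → G`. -/
def evalWord {n : ℕ} {G : Type*} [Group G] (φ : Fin n → G) (w : List (Fin n × Bool)) : G :=
  FreeGroup.lift φ (FreeGroup.mk w)

/-- A list is reduced iff adjacent letters are never inverse of each other. -/
private lemma chain'_imp_reduce {α : Type*} [DecidableEq α] :
    ∀ {L : List (α × Bool)},
      List.Chain' (fun a b : α × Bool => ¬(a.1 = b.1 ∧ a.2 = !b.2)) L →
      FreeGroup.reduce L = L := by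
  intro L hL
  induction L with
  | nil => rfl
  | cons a L ih =>
    rw [FreeGroup.reduce.cons, ih hL.tail]
    cases L with
    | nil => rfl
    | cons b t =>
      have hab : ¬(a.1 = b.1 ∧ a.2 = !b.2) := (List.isChain_cons_cons.mp hL).1
      simp [hab]

private lemma reduce_imp_chain' {α : Type*} [DecidableEq α] :
    ∀ {L : List (α × Bool)}, FreeGroup.reduce L = L →
      List.Chain' (fun a b : α × Bool => ¬(a.1 = b.1 ∧ a.2 = !b.2)) L := by
  intro L
  induction L with
  | nil => intro _; exact List.isChain_nil
  | cons a L ih =>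
    intro h
    rw [FreeGroup.reduce.cons] at h
    cases hRL : FreeGroup.reduce L with
    | nil =>
      rw [hRL] at h
      dsimp at h
      have : L = [] := by
        have := (List.cons.injEq _ _ _ _).mp h
        exact this.2.symm
      subst this
      exact List.isChain_singleton _
    | cons b t =>
      rw [hRL] at h
      dsimp at h
      by_cases hc : a.1 = b.1 ∧ a.2 = !b.2
      · rw [if_pos hc] at h
        exfalso
        have hlen : (FreeGroup.reduce L).length ≤ L.length := FreeGroup.reduce.red.length_le
        rw [hRL] at hlen
        rw [h] at hlen
        simp at hlen
      · rw [if_neg hc] at h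
        have hL : L = b :: t := ((List.cons.injEq _ _ _ _).mp h).2.symm
        have hch : List.Chain' (fun a b : α × Bool => ¬(a.1 = b.1 ∧ a.2 = !b.2)) L :=
          ih (by rw [hRL, hL])
        rw [hL]
        rw [hL] at hch
        exact List.isChain_cons_cons.mpr ⟨hc, hch⟩

/-- Sandwiching a reduced word between a letter and its inverse. -/
private lemma sandwich {n : ℕ} {G : Type*} [Group G] (φ : Fin n → G) (p : Fin n × Bool)
    (U : List (Fin n × Bool)) (hU : FreeGroup.reduce U = U) (hne : U ≠ [])
    (hh : U.head hne ≠ (p.1, !p.2)) (hl : U.getLast hne ≠ p)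
    (heval : FreeGroup.lift φ (FreeGroup.mk U) = 1) :
    ∃ V : List (Fin n × Bool), FreeGroup.reduce V = V ∧ V ≠ [] ∧
      V.head? = some p ∧ V.getLast? = some (p.1, !p.2) ∧
      FreeGroup.lift φ (FreeGroup.mk V) = 1 := by
  refine ⟨(p :: U) ++ [(p.1, !p.2)], ?_, by simp, by simp, List.getLast?_concat, ?_⟩
  · apply chain'_imp_reduce
    rw [List.Chain', List.isChain_append]
    refine ⟨?_, List.isChain_singleton _, ?_⟩
    · rw [List.isChain_cons]
      refine ⟨?_, reduce_imp_chain' hU⟩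
      intro y hy
      rw [List.head?_eq_head hne, Option.mem_some_iff] at hy
      subst hy
      rintro ⟨h1, h2⟩
      apply hh
      have : (U.head hne).2 = !p.2 := by rw [h2]; simp
      exact Prod.ext h1.symm this
    · intro x hx y hy
      rw [List.getLast?_cons, List.getLast?_eq_getLast hne] at hx
      simp only [Option.getD_some, Option.mem_some_iff] at hx
      simp only [List.head?_cons, Option.mem_some_iff] at hy
      subst hx; subst hy
      rintro ⟨h1, h2⟩
      apply hl
      simp only [Bool.not_not] at h2
      exact Prod.ext h1 h2
  · have hsplit : FreeGroup.mk ((p :: U) ++ [(p.1, !p.2)]) =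
        FreeGroup.mk [p] * FreeGroup.mk U * FreeGroup.mk [(p.1, !p.2)] := by
      rw [FreeGroup.mul_mk, FreeGroup.mul_mk]
      simp
    have hinv : FreeGroup.mk [(p.1, !p.2)] = (FreeGroup.mk [p])⁻¹ := by
      rw [FreeGroup.inv_mk]
      simp [FreeGroup.invRev]
    rw [hsplit, map_mul, map_mul, heval, mul_one, hinv, map_inv, mul_inv_cancel]

/-- Let `G` be a group and `φ : X → G` a function such that the induced homomorphism
`F(X) → G` is surjective but not injective.  Then for every `i` and every sign `ε` there is a
nontrivial reduced word with first letter `x_i^{-ε}` and last letter `x_i^{ε}` which evaluates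
to `1` in `G`. -/
theorem exists_relator_with_prescribed_ends
    (n : ℕ) (hn : 2 ≤ n) (G : Type*) [Group G] (φ : Fin n → G)
    (hsurj : Function.Surjective (FreeGroup.lift φ))
    (hninj : ¬ Function.Injective (FreeGroup.lift φ))
    (i : Fin n) (ε : Bool) :
    ∃ r : List (Fin n × Bool), FreeGroup.reduce r = r ∧ r ≠ [] ∧
      r.head? = some (i, !ε) ∧ r.getLast? = some (i, ε) ∧ evalWord φ r = 1 := by
  classical
  obtain ⟨a, b, hab, hne⟩ := Function.not_injective_iff.mp hninj
  set g := a * b⁻¹ with hg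
  have hg1 : FreeGroup.lift φ g = 1 := by
    rw [hg, map_mul, map_inv, hab, mul_inv_cancel]
  have hgne : g ≠ 1 := by
    intro h
    apply hne
    rwa [hg, mul_inv_eq_one] at h
  set L := g.toWord with hLdef
  have hLred : FreeGroup.reduce L = L := FreeGroup.reduce_toWord g
  have hLne : L ≠ [] := by
    rw [hLdef, Ne, FreeGroup.toWord_eq_nil_iff]
    exact hgne
  have hLeval : FreeGroup.lift φ (FreeGroup.mk L) = 1 := by
    rw [hLdef, FreeGroup.mk_toWord]
    exact hg1
  have step : ∃ U, ∃ hU : U ≠ [], FreeGroup.reduce U = U ∧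
      U.head hU ≠ (i, ε) ∧ U.getLast hU ≠ (i, !ε) ∧
      FreeGroup.lift φ (FreeGroup.mk U) = 1 := by
    by_cases hgood : L.head hLne ≠ (i, ε) ∧ L.getLast hLne ≠ (i, !ε)
    · exact ⟨L, hLne, hLred, hgood.1, hgood.2, hLeval⟩
    · obtain ⟨j, hj⟩ : ∃ j : Fin n, j ≠ i := by
        rcases i with ⟨iv, hi⟩
        by_cases h0 : iv = 0
        · exact ⟨⟨1, by omega⟩, by simp [Fin.ext_iff, h0]⟩
        · exact ⟨⟨0, by omega⟩, by simp [Fin.ext_iff]; omega⟩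
      rw [not_and_or, not_not, not_not] at hgood
      obtain ⟨s, hs1, hs2⟩ : ∃ s : Bool, L.head hLne ≠ (j, !s) ∧ L.getLast hLne ≠ (j, s) := by
        rcases hgood with hH | hT
        · refine ⟨if L.getLast hLne = (j, true) then false else true, ?_, ?_⟩
          · rw [hH]
            simp [Prod.ext_iff]
            intro h
            exact absurd h.symm hj
          · split_ifs with ht
            · rw [ht]; simp
            · exact ht
        · refine ⟨if L.head hLne = (j, true) then true else false, ?_, ?_⟩
          · split_ifs with hh
            · rw [hh]; simp
            · simpa using hh
          · rw [hT]
            simp [Prod.ext_iff]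
            intro h
            exact absurd h.symm hj
      obtain ⟨V, hVred, hVne, hVh, hVl, hVeval⟩ :=
        sandwich φ (j, s) L hLred hLne (by simpa using hs1) hs2 hLeval
      refine ⟨V, hVne, hVred, ?_, ?_, hVeval⟩
      · have : V.head hVne = (j, s) := by
          rw [List.head?_eq_head hVne] at hVh
          exact Option.some.inj hVh
        rw [this]
        simp [Prod.ext_iff]
        intro h
        exact absurd h hj
      · have : V.getLast hVne = (j, !s) := by
          rw [List.getLast?_eq_getLast hVne] at hVl
          exact Option.some.inj hVl
        rw [this]
        simp [Prod.ext_iff]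
        intro h
        exact absurd h hj
  obtain ⟨U, hUne, hUred, hUh, hUl, hUeval⟩ := step
  obtain ⟨V, hVred, hVne, hVh, hVl, hVeval⟩ :=
    sandwich φ (i, !ε) U hUred hUne (by simpa using hUh) hUl hUeval
  exact ⟨V, hVred, hVne, hVh, by simpa using hVl, hVeval⟩
end

section
/- Let G be a group and X → G a function such that the induced homomorphism F → G is surjective but not injective. Let P ⊆ ℕ be the set of lengths of nontrivial reduced words w in the alphabet X ∪ X⁻¹ whose first letter is different from x_1^{−1}, whose last letter is x_1, and which satisfy w =_G 1. Then P is nonempty and the greatest common divisor of the elements of P divides 2. -/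
namespace PeriodAux

section Red

variable {α : Type*} [DecidableEq α]

/-- The no-cancellation relation between adjacent letters. -/
def Rel (p q : α × Bool) : Prop := ¬(p.1 = q.1 ∧ p.2 = !q.2)

theorem reduce_eq_self_iff (L : List (α × Bool)) :
    FreeGroup.reduce L = L ↔ List.Chain' (Rel (α := α)) L := by
  induction L with
  | nil => simp; exact List.isChain_nil
  | cons a t ih =>
    rw [FreeGroup.reduce.cons, show List.Chain' Rel (a :: t) ↔ List.IsChain Rel (a :: t) from Iff.rfl,
      List.isChain_cons]
    constructor
    · intro h
      rcases ht : FreeGroup.reduce t with _ | ⟨hd, tl⟩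
      · rw [ht] at h
        simp only [List.casesOn] at h
        have : t = [] := by
          have := congrArg List.length h
          simp at this
          cases t with
          | nil => rfl
          | cons b s => simp at this
        subst this
        simp
      · rw [ht] at h
        simp only at h
        by_cases hc : a.1 = hd.1 ∧ a.2 = !hd.2
        · rw [if_pos hc] at h
          exfalso
          have h1 : (FreeGroup.reduce t).length ≤ t.length :=
            FreeGroup.Red.length_le FreeGroup.reduce.red
          rw [ht, h] at h1
          simp at h1
        · rw [if_neg hc] at h
          have h2 : t = hd :: tl := by
            injection h with _ h2; exact h2.symm
          have hrt : FreeGroup.reduce t = t := by rw [ht, h2]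
          refine ⟨?_, ih.mp hrt⟩
          intro y hy
          rw [h2] at hy
          simp at hy
          subst hy
          exact hc
    · rintro ⟨hhd, hch⟩
      have hrt : FreeGroup.reduce t = t := ih.mpr hch
      rw [hrt]
      cases t with
      | nil => rfl
      | cons hd tl =>
        simp only
        rw [if_neg (hhd hd (by simp))]

theorem invRev_head? (c : List (α × Bool)) :
    (FreeGroup.invRev c).head? = c.getLast?.map (fun g => (g.1, !g.2)) := by
  unfold FreeGroup.invRev
  rw [List.head?_reverse, List.getLast?_map]

theorem invRev_getLast? (c : List (α × Bool)) :
    (FreeGroup.invRev c).getLast? = c.head?.map (fun g => (g.1, !g.2)) := by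
  unfold FreeGroup.invRev
  rw [List.getLast?_reverse, List.head?_map]

theorem invRev_ne_nil {c : List (α × Bool)} (h : c ≠ []) : FreeGroup.invRev c ≠ [] := by
  intro hc
  apply h
  have := congrArg List.length hc
  rw [FreeGroup.invRev_length] at this
  exact List.eq_nil_of_length_eq_zero this

/-- A reduced word all of whose letters have the same index is a constant word. -/
theorem all_eq_replicate (x0 : α) :
    ∀ (r : List (α × Bool)), List.Chain' (Rel (α := α)) r → (∀ p ∈ r, p.1 = x0) →
      ∀ a ∈ r.head?, r = List.replicate r.length a := by
  intro r
  induction r with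
  | nil => intro _ _ a ha; simp at ha
  | cons p t ih =>
    intro hch hall a ha
    obtain rfl : a = p := by simpa using ha.symm
    cases t with
    | nil => simp
    | cons q s =>
      have hch' := (List.isChain_cons.mp hch).2
      have hrel : Rel a q := (List.isChain_cons.mp hch).1 q (by simp)
      have hq : q :: s = List.replicate (q :: s).length q :=
        ih hch' (fun p hp => hall p (List.mem_cons_of_mem _ hp)) q rfl
      have haq : a = q := by
        have h1 : a.1 = x0 := hall a (by simp)
        have h2 : q.1 = x0 := hall q (by simp)
        have h3 : ¬(a.2 = !q.2) := fun hb => hrel ⟨h1.trans h2.symm, hb⟩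
        have h4 : a.2 = q.2 := by
          cases hb : q.2 <;> cases hb' : a.2 <;> rw [hb, hb'] at h3 <;> simp at h3 <;> rfl
        exact Prod.ext (h1.trans h2.symm) h4
      rw [List.length_cons, List.replicate_succ]
      rw [haq, ← hq]

end Red

section Eval

variable {n : ℕ} {G : Type*} [Group G] (φ : Fin n → G)

theorem evalWord_append (a b : List (Fin n × Bool)) :
    evalWord φ (a ++ b) = evalWord φ a * evalWord φ b := by
  unfold evalWord
  rw [← FreeGroup.mul_mk, map_mul]

theorem evalWord_invRev (a : List (Fin n × Bool)) :
    evalWord φ (FreeGroup.invRev a) = (evalWord φ a)⁻¹ := by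
  unfold evalWord
  rw [← FreeGroup.inv_mk, map_inv]

theorem evalWord_singleton (i : Fin n) (b : Bool) :
    evalWord φ [(i, b)] = if b then φ i else (φ i)⁻¹ := by
  cases b
  · have : ([(i, false)] : List (Fin n × Bool)) = FreeGroup.invRev [(i, true)] := by
      simp [FreeGroup.invRev]
    rw [this, evalWord_invRev]
    simp only [if_neg Bool.false_ne_true]
    congr 1
    exact FreeGroup.lift_apply_of
  · simp only [if_pos rfl]
    exact FreeGroup.lift_apply_of

theorem evalWord_replicate (k : ℕ) (i : Fin n) (b : Bool) :
    evalWord φ (List.replicate k (i, b)) = (if b then φ i else (φ i)⁻¹) ^ k := by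
  induction k with
  | zero =>
    show FreeGroup.lift φ (FreeGroup.mk []) = _
    rw [show FreeGroup.mk ([] : List (Fin n × Bool)) = 1 from rfl]
    simp
  | succ m ih =>
    rw [List.replicate_succ,
      show ((i,b) :: List.replicate m (i,b)) = [(i,b)] ++ List.replicate m (i,b) from rfl,
      evalWord_append, ih, evalWord_singleton, pow_succ']

/-- The key construction: from a reduced word `c` with non-`x0` boundary letters whose value
commutes with `φ x0`, we build reduced words `c⁻¹ x0⁻ᵉ c x0ᵉ` of all lengths `2|c| + 2e`. -/
theorem key (x0 : Fin n) (c : List (Fin n × Bool)) (hred : FreeGroup.reduce c = c)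
    (hne : c ≠ []) (hhead : ∀ p ∈ c.head?, p.1 ≠ x0) (hlast : ∀ p ∈ c.getLast?, p.1 ≠ x0)
    (hcomm : Commute (evalWord φ c) (φ x0)) (e : ℕ) (he : e ≠ 0) :
    ∃ w : List (Fin n × Bool), FreeGroup.reduce w = w ∧ w ≠ [] ∧
      w.length = 2 * c.length + 2 * e ∧
      w.head? ≠ some (x0, false) ∧ w.getLast? = some (x0, true) ∧ evalWord φ w = 1 := by
  set A := FreeGroup.invRev c with hA
  set B := List.replicate e ((x0, false) : Fin n × Bool) with hB
  set D := List.replicate e ((x0, true) : Fin n × Bool) with hD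
  have hAne : A ≠ [] := invRev_ne_nil hne
  have hBne : B ≠ [] := fun h => he (by simpa [hB] using congrArg List.length h)
  have hDne : D ≠ [] := fun h => he (by simpa [hD] using congrArg List.length h)
  have hBhead : B.head? = some (x0, false) := by simp [hB, List.head?_replicate, he]
  have hBlast : B.getLast? = some (x0, false) := by simp [hB, List.getLast?_replicate, he]
  have hDhead : D.head? = some (x0, true) := by simp [hD, List.head?_replicate, he]
  have hDlast : D.getLast? = some (x0, true) := by simp [hD, List.getLast?_replicate, he]
  refine ⟨A ++ B ++ c ++ D, ?_, ?_, ?_, ?_, ?_, ?_⟩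
  · -- reduced
    rw [reduce_eq_self_iff]
    have hchc : List.Chain' Rel c := (reduce_eq_self_iff c).mp hred
    have hchA : List.Chain' Rel A := by
      rw [← reduce_eq_self_iff, hA, FreeGroup.reduce_invRev, hred]
    have hchB : List.Chain' Rel B := List.isChain_replicate_of_rel _ (by simp [Rel])
    have hchD : List.Chain' Rel D := List.isChain_replicate_of_rel _ (by simp [Rel])
    refine List.isChain_append.mpr ⟨List.isChain_append.mpr
      ⟨List.isChain_append.mpr ⟨hchA, hchB, ?_⟩, hchc, ?_⟩, hchD, ?_⟩
    · -- A → B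
      intro x hx y hy
      rw [invRev_getLast?] at hx
      rw [hBhead] at hy
      simp at hy
      subst hy
      obtain ⟨p, hp, hpx⟩ := Option.map_eq_some_iff.mp (Option.mem_def.mp hx)
      intro hrel
      exact hhead p hp (by rw [← hpx] at hrel; exact hrel.1)
    · -- (A ++ B) → c
      intro x hx y hy
      rw [List.getLast?_append_of_ne_nil _ hBne, hBlast] at hx
      simp at hx
      subst hx
      intro hrel
      exact hhead y hy (hrel.1.symm)
    · -- (A ++ B ++ c) → D
      intro x hx y hy
      rw [List.getLast?_append_of_ne_nil _ hne] at hx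
      rw [hDhead] at hy
      simp at hy
      subst hy
      intro hrel
      exact hlast x hx hrel.1
  · simp [hAne]
  · simp [List.length_append, hA, hB, hD, FreeGroup.invRev_length]
    ring
  · -- head
    rw [List.head?_append_of_ne_nil _ (by simp [hAne]),
      List.head?_append_of_ne_nil _ (by simp [hAne]),
      List.head?_append_of_ne_nil _ hAne, invRev_head?]
    have hq' : c.getLast? = some (c.getLast hne) := List.getLast?_eq_getLast_of_ne_nil hne
    rw [hq']
    intro hcontra
    simp at hcontra
    exact hlast _ (by rw [hq']; rfl) hcontra.1
  · rw [List.getLast?_append_of_ne_nil _ hDne, hDlast]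
  · rw [evalWord_append, evalWord_append, evalWord_append, hA, hB, hD,
      evalWord_invRev, evalWord_replicate, evalWord_replicate]
    simp only [if_neg Bool.false_ne_true, if_pos rfl]
    set a := evalWord φ c
    set g := φ x0
    have h2 : (g ^ e)⁻¹ * a = a * (g ^ e)⁻¹ := ((hcomm.pow_right e).inv_right.symm).eq
    rw [inv_pow]
    calc a⁻¹ * (g ^ e)⁻¹ * a * g ^ e = a⁻¹ * ((g ^ e)⁻¹ * a) * g ^ e := by
            rw [mul_assoc a⁻¹]
      _ = a⁻¹ * (a * (g ^ e)⁻¹) * g ^ e := by rw [h2]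
      _ = 1 := by rw [← mul_assoc, inv_mul_cancel, one_mul, inv_mul_cancel]

/-- Stripping `x0`-letters from both ends of a relation containing a non-`x0` letter. -/
theorem strip (x0 : Fin n) :
    ∀ (N : ℕ) (r : List (Fin n × Bool)), r.length ≤ N → FreeGroup.reduce r = r → r ≠ [] →
      (∃ p ∈ r, p.1 ≠ x0) → (∃ z : ℤ, evalWord φ r = (φ x0) ^ z) →
      ∃ c : List (Fin n × Bool), FreeGroup.reduce c = c ∧ c ≠ [] ∧
        (∀ p ∈ c.head?, p.1 ≠ x0) ∧ (∀ p ∈ c.getLast?, p.1 ≠ x0) ∧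
        Commute (evalWord φ c) (φ x0) := by
  intro N
  induction N with
  | zero =>
    intro r hlen _ hne _ _
    exact absurd (List.eq_nil_of_length_eq_zero (Nat.le_zero.mp hlen)) hne
  | succ N ih =>
    intro r hlen hred hne hex ⟨z, hz⟩
    have hch : List.Chain' Rel r := (reduce_eq_self_iff r).mp hred
    by_cases hH : ∃ p ∈ r.head?, p.1 = x0
    · -- strip the first letter
      obtain ⟨p, hp, hpx⟩ := hH
      obtain ⟨t, ht⟩ : ∃ t, r = p :: t := by
        cases r with
        | nil => simp at hp
        | cons q s => exact ⟨s, by simp at hp; rw [hp]⟩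
      have htne : t ≠ [] := by
        obtain ⟨q, hq, hqx⟩ := hex
        rw [ht] at hq
        rcases List.mem_cons.mp hq with h | h
        · exact absurd (h ▸ hqx) (by rw [hpx]; simp)
        · exact List.ne_nil_of_mem h
      have hcht : List.Chain' Rel t := by
        rw [ht] at hch; exact (List.isChain_cons.mp hch).2
      have hp2 : p = (x0, p.2) := Prod.ext hpx rfl
      have hz' : evalWord φ t = (φ x0) ^ (-(if p.2 then (1:ℤ) else -1) + z) := by
        have hsplit : evalWord φ r = evalWord φ [p] * evalWord φ t := by
          rw [ht]; exact evalWord_append φ [p] t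
        have hone : evalWord φ [p] = (φ x0) ^ (if p.2 then (1:ℤ) else -1) := by
          rw [hp2, evalWord_singleton]
          cases p.2 <;> simp
        rw [hsplit, hone] at hz
        have h5 : (φ x0) ^ (-(if p.2 then (1:ℤ) else -1) + z) = evalWord φ t := by
          rw [zpow_add, zpow_neg, ← hz, inv_mul_cancel_left]
        exact h5.symm
      exact ih t (by rw [ht] at hlen; simp at hlen; omega)
        ((reduce_eq_self_iff t).mpr hcht) htne
        (by
          obtain ⟨q, hq, hqx⟩ := hex
          rw [ht] at hq
          rcases List.mem_cons.mp hq with h | h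
          · exact absurd (h ▸ hqx) (by rw [hpx]; simp)
          · exact ⟨q, h, hqx⟩)
        ⟨_, hz'⟩
    · by_cases hL : ∃ p ∈ r.getLast?, p.1 = x0
      · -- strip the last letter
        obtain ⟨p, hp, hpx⟩ := hL
        set t := r.dropLast with htdef
        have ht : r = t ++ [p] := by
          rw [htdef]
          exact (List.dropLast_append_getLast? p hp).symm
        have htne : t ≠ [] := by
          obtain ⟨q, hq, hqx⟩ := hex
          rw [ht] at hq
          rcases List.mem_append.mp hq with h | h
          · exact List.ne_nil_of_mem h
          · simp at h
            subst h
            exact absurd hpx hqx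
        have hcht : List.Chain' Rel t := hch.prefix (ht ▸ List.prefix_append t [p])
        have hp2 : p = (x0, p.2) := Prod.ext hpx rfl
        have hz' : evalWord φ t = (φ x0) ^ (z + -(if p.2 then (1:ℤ) else -1)) := by
          have hsplit : evalWord φ r = evalWord φ t * evalWord φ [p] := by
            rw [ht]; exact evalWord_append φ t [p]
          have hone : evalWord φ [p] = (φ x0) ^ (if p.2 then (1:ℤ) else -1) := by
            rw [hp2, evalWord_singleton]
            cases p.2 <;> simp
          rw [hsplit, hone] at hz
          have h5 : (φ x0) ^ (z + -(if p.2 then (1:ℤ) else -1)) = evalWord φ t := by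
            rw [zpow_add, zpow_neg, ← hz, mul_inv_cancel_right]
          exact h5.symm
        refine ih t ?_ ((reduce_eq_self_iff t).mpr hcht) htne ?_ ⟨_, hz'⟩
        · have := congrArg List.length ht
          simp at this
          omega
        · obtain ⟨q, hq, hqx⟩ := hex
          rw [ht] at hq
          rcases List.mem_append.mp hq with h | h
          · exact ⟨q, h, hqx⟩
          · simp at h
            exact absurd hpx (h ▸ hqx)
      · -- both ends avoid x0
        push_neg at hH hL
        refine ⟨r, hred, hne, hH, hL, ?_⟩
        rw [hz]
        exact (Commute.refl (φ x0)).zpow_left z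

end Eval

end PeriodAux

/-- Let `G` be a group and `φ : X → G` a function such that the induced homomorphism
`F(X) → G` is surjective but not injective.  Let `P` be the set of lengths of nontrivial
reduced words whose first letter differs from `x_1⁻¹`, whose last letter is `x_1`, and which
evaluate to `1` in `G`.  Then `P` is nonempty and the greatest common divisor of the elements
of `P` divides `2` (equivalently, some finite subset of `P` has gcd dividing `2`). -/
theorem period_divides_two
    (n : ℕ) (hn : 2 ≤ n) (G : Type*) [Group G] (φ : Fin n → G)
    (hsurj : Function.Surjective (FreeGroup.lift φ))
    (hninj : ¬ Function.Injective (FreeGroup.lift φ)) :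
    {l : ℕ | ∃ w : List (Fin n × Bool), FreeGroup.reduce w = w ∧ w ≠ [] ∧ w.length = l ∧
        w.head? ≠ some (⟨0, by omega⟩, false) ∧ w.getLast? = some (⟨0, by omega⟩, true) ∧
        evalWord φ w = 1}.Nonempty ∧
      ∃ T : Finset ℕ,
        (T : Set ℕ) ⊆ {l : ℕ | ∃ w : List (Fin n × Bool),
            FreeGroup.reduce w = w ∧ w ≠ [] ∧ w.length = l ∧
            w.head? ≠ some (⟨0, by omega⟩, false) ∧ w.getLast? = some (⟨0, by omega⟩, true) ∧
            evalWord φ w = 1} ∧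
        T.Nonempty ∧ T.gcd id ∣ 2 := by
  classical
  set x0 : Fin n := ⟨0, by omega⟩ with hx0
  rw [Function.not_injective_iff] at hninj
  obtain ⟨a, b, hab, hneq⟩ := hninj
  have hu1 : FreeGroup.lift φ (a * b⁻¹) = 1 := by rw [map_mul, map_inv, hab, mul_inv_cancel]
  have hune : a * b⁻¹ ≠ 1 := fun h => hneq (mul_inv_eq_one.mp h)
  obtain ⟨r, hredr, hrne, hevalr⟩ : ∃ r : List (Fin n × Bool),
      FreeGroup.reduce r = r ∧ r ≠ [] ∧ evalWord φ r = 1 :=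
    ⟨(a * b⁻¹).toWord, FreeGroup.reduce_toWord _,
      fun h => hune (FreeGroup.toWord_eq_nil_iff.mp h),
      by unfold evalWord; rw [FreeGroup.mk_toWord]; exact hu1⟩
  have hc : ∃ c : List (Fin n × Bool), FreeGroup.reduce c = c ∧ c ≠ [] ∧
      (∀ p ∈ c.head?, p.1 ≠ x0) ∧ (∀ p ∈ c.getLast?, p.1 ≠ x0) ∧
      Commute (evalWord φ c) (φ x0) := by
    by_cases hall : ∀ p ∈ r, p.1 = x0
    · -- pure power of x0 case
      set x1 : Fin n := ⟨1, by omega⟩ with hx1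
      have hx01 : x1 ≠ x0 := by simp [hx0, hx1, Fin.ext_iff]
      obtain ⟨a0, ha0⟩ : ∃ a0, r.head? = some a0 := by
        cases hrr : r with
        | nil => exact absurd hrr hrne
        | cons p t => exact ⟨p, rfl⟩
      have hrep : r = List.replicate r.length a0 :=
        PeriodAux.all_eq_replicate x0 r ((PeriodAux.reduce_eq_self_iff r).mp hredr) hall a0
          (by rw [ha0]; rfl)
      have ha0x : a0.1 = x0 := hall a0 (List.mem_of_mem_head? (by rw [ha0]; rfl))
      set L := r.length with hL
      have hL1 : L ≠ 0 := fun h => hrne (List.eq_nil_of_length_eq_zero h)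
      have hgL : (φ x0) ^ L = 1 := by
        have heq := hevalr
        rw [hrep] at heq
        have ha0e : a0 = (x0, a0.2) := Prod.ext ha0x rfl
        rw [ha0e, PeriodAux.evalWord_replicate] at heq
        cases h2 : a0.2
        · rw [h2] at heq
          simp only [Bool.false_eq_true, if_false] at heq
          rw [inv_pow] at heq
          exact inv_eq_one.mp heq
        · rw [h2] at heq
          simpa using heq
      refine ⟨[((x1, true) : Fin n × Bool)] ++
        (List.replicate L ((x0, true) : Fin n × Bool) ++ [((x1, false) : Fin n × Bool)]),
        ?_, by simp, ?_, ?_, ?_⟩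
      · rw [PeriodAux.reduce_eq_self_iff]
        refine List.isChain_append.mpr ⟨List.isChain_singleton _,
          List.isChain_append.mpr ⟨List.isChain_replicate_of_rel _ (by simp [PeriodAux.Rel]),
            List.isChain_singleton _, ?_⟩, ?_⟩
        · intro x hx y hy
          rw [List.getLast?_replicate] at hx
          simp [hL1] at hx
          simp at hy
          subst hx; subst hy
          exact fun hrel => hx01 hrel.1.symm
        · intro x hx y hy
          simp at hx
          rw [List.head?_append_of_ne_nil _
            (fun h => hL1 (by simpa using congrArg List.length h)),
            List.head?_replicate] at hy
          simp [hL1] at hy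
          subst hx; subst hy
          exact fun hrel => hx01 hrel.1
      · intro p hp hpx
        simp at hp
        subst hp
        exact hx01 hpx
      · intro p hp hpx
        rw [List.getLast?_append_of_ne_nil _ (by simp),
          List.getLast?_append_of_ne_nil _ (by simp)] at hp
        simp at hp
        subst hp
        exact hx01 hpx
      · have heval : evalWord φ ([((x1, true) : Fin n × Bool)] ++
            (List.replicate L ((x0, true) : Fin n × Bool) ++ [((x1, false) : Fin n × Bool)])) = 1 := by
          rw [PeriodAux.evalWord_append, PeriodAux.evalWord_append,
            PeriodAux.evalWord_singleton, PeriodAux.evalWord_singleton,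
            PeriodAux.evalWord_replicate]
          simp [hgL]
        rw [heval]
        exact Commute.one_left _
    · push_neg at hall
      exact PeriodAux.strip φ x0 r.length r le_rfl hredr hrne hall
        ⟨0, by simpa using hevalr⟩
  obtain ⟨c, hcred, hcne, hch, hcl, hcc⟩ := hc
  obtain ⟨w1, h1red, h1ne, h1len, h1h, h1l, h1e⟩ :=
    PeriodAux.key φ x0 c hcred hcne hch hcl hcc 1 one_ne_zero
  obtain ⟨w2, h2red, h2ne, h2len, h2h, h2l, h2e⟩ :=
    PeriodAux.key φ x0 c hcred hcne hch hcl hcc 2 two_ne_zero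
  set L1 := 2 * c.length + 2 * 1 with hL1def
  set L2 := 2 * c.length + 2 * 2 with hL2def
  constructor
  · exact ⟨L1, w1, h1red, h1ne, h1len, h1h, h1l, h1e⟩
  · refine ⟨{L1, L2}, ?_, ⟨L1, by simp⟩, ?_⟩
    · intro l hl
      simp only [Finset.coe_insert, Finset.coe_singleton, Set.mem_insert_iff,
        Set.mem_singleton_iff] at hl
      rcases hl with rfl | rfl
      · exact ⟨w1, h1red, h1ne, h1len, h1h, h1l, h1e⟩
      · exact ⟨w2, h2red, h2ne, h2len, h2h, h2l, h2e⟩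
    · have hd1 : Finset.gcd {L1, L2} id ∣ L1 := Finset.gcd_dvd (by simp [hL1def])
      have hd2 : Finset.gcd {L1, L2} id ∣ L2 := Finset.gcd_dvd (by simp [hL1def, hL2def])
      have hsub := Nat.dvd_sub hd2 hd1
      have : L2 - L1 = 2 := by omega
      rwa [this] at hsub
end

section
/- Let J be a finite group, q a prime not dividing |J|, and E a nonzero irreducible (simple) module over the group algebra 𝔽_q[J]. Then for every m ≥ 1, the number of m-tuples (y_1,…,y_m) ∈ (E^m)^m whose entries generate the direct sum E^m as an 𝔽_q[J]-module is at least ∏_{j=1}^m (1 − |E|^{−j}) · |E|^{m²}. -/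
open Function Finset

/-- Maschke's theorem, universe-polymorphic in the group. -/
theorem aux_isSemisimpleRing.{v} (q : ℕ) (hq : q.Prime) (J : Type v) [Group J] [Finite J]
    (hqJ : ¬ q ∣ Nat.card J) : IsSemisimpleRing (MonoidAlgebra (ZMod q) J) := by
  haveI : NeZero q := ⟨hq.ne_zero⟩
  haveI : Fact q.Prime := ⟨hq⟩
  haveI : Fintype J := Fintype.ofFinite J
  have hd : ¬ (q ∣ Fintype.card J) := by rwa [← Nat.card_eq_fintype_card]
  haveI : NeZero ((Nat.card J : ULift.{v} (ZMod q))) := by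
    constructor
    intro h0
    have h1 : ((Nat.card J : ZMod q)) = 0 := by
      have := congrArg (ULift.ringEquiv (R := ZMod q)) h0
      simpa using this
    rw [ZMod.natCast_eq_zero_iff] at h1
    exact hqJ h1
  haveI : IsSemisimpleRing (MonoidAlgebra (ULift.{v} (ZMod q)) J) := inferInstance
  exact (MonoidAlgebra.mapRingEquiv J (ULift.ringEquiv (R := ZMod q))).isSemisimpleRing

/-! ### Counting injective linear maps over a finite division ring -/

theorem card_injective_linearMap_ge (D : Type*) [DivisionRing D] [Finite D]
    (W : Type*) [AddCommGroup W] [Module D W] [Finite W] (m : ℕ) :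
    ∏ j ∈ Finset.range m, (Nat.card W - Nat.card D ^ j) ≤
      Nat.card {g : (Fin m → D) →ₗ[D] W // Function.Injective g} := by
  classical
  induction m with
  | zero =>
    have hne : Nonempty {g : (Fin 0 → D) →ₗ[D] W // Function.Injective g} :=
      ⟨0, fun a b _ => Subsingleton.elim a b⟩
    haveI : Finite ((Fin 0 → D) →ₗ[D] W) :=
      Finite.of_injective (fun g => (g : (Fin 0 → D) → W)) DFunLike.coe_injective
    simpa using Nat.one_le_iff_ne_zero.mpr (Nat.card_ne_zero.mpr ⟨hne, inferInstance⟩)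
  | succ m ih =>
    haveI : Finite ((Fin m → D) →ₗ[D] W) :=
      Finite.of_injective (fun g => (g : (Fin m → D) → W)) DFunLike.coe_injective
    haveI : Finite ((Fin (m+1) → D) →ₗ[D] W) :=
      Finite.of_injective (fun g => (g : (Fin (m+1) → D) → W)) DFunLike.coe_injective
    set ext0 : (Fin (m+1) → D) →ₗ[D] (Fin m → D) :=
      LinearMap.funLeft D D Fin.castSucc with hext0
    -- the "multiply the last coordinate into w" map
    let lastSmul : W → ((Fin (m+1) → D) →ₗ[D] W) := fun w =>
      { toFun := fun c => c (Fin.last m) • w,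
        map_add' := fun a b => by simp [add_smul],
        map_smul' := fun d c => by simp [mul_smul] }
    let T := Σ g' : {g' : (Fin m → D) →ₗ[D] W // Function.Injective g'},
      {w : W // w ∉ Set.range g'.1}
    have Ψval : ∀ (g' : (Fin m → D) →ₗ[D] W) (w : W) (c : Fin (m+1) → D),
        (g'.comp ext0 + lastSmul w) c = g' (c ∘ Fin.castSucc) + c (Fin.last m) • w :=
      fun _ _ _ => rfl
    have build : ∀ p : T, Function.Injective ⇑(p.1.1.comp ext0 + lastSmul p.2.1) := by
      rintro ⟨⟨g', hg'⟩, ⟨w, hw⟩⟩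
      rw [← LinearMap.ker_eq_bot, LinearMap.ker_eq_bot']
      intro c hc
      have hc' : g' (c ∘ Fin.castSucc) + c (Fin.last m) • w = 0 := hc
      by_cases hd : c (Fin.last m) = 0
      · rw [hd, zero_smul, add_zero] at hc'
        have h0 : c ∘ Fin.castSucc = 0 := hg' (by rw [hc', map_zero])
        funext i
        induction i using Fin.lastCases with
        | last => exact hd
        | cast j => exact congrFun h0 j
      · exact absurd ⟨(c (Fin.last m))⁻¹ • (-(c ∘ Fin.castSucc)), by
          rw [map_smul, map_neg, neg_eq_of_add_eq_zero_right hc', inv_smul_smul₀ hd]⟩ hw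
    let Ψ : T → {g : (Fin (m+1) → D) →ₗ[D] W // Function.Injective g} := fun p =>
      ⟨p.1.1.comp ext0 + lastSmul p.2.1, build p⟩
    have key1 : ∀ p : T, (Ψ p).1 (Pi.single (Fin.last m) 1) = p.2.1 := by
      intro p
      have h0 : (Pi.single (Fin.last m) 1 : Fin (m+1) → D) ∘ Fin.castSucc = 0 := by
        funext j
        exact Pi.single_eq_of_ne (Fin.castSucc_lt_last j).ne 1
      have e1 : (Ψ p).1 (Pi.single (Fin.last m) 1)
          = p.1.1 ((Pi.single (Fin.last m) 1 : Fin (m+1) → D) ∘ Fin.castSucc)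
            + (Pi.single (Fin.last m) 1 : Fin (m+1) → D) (Fin.last m) • p.2.1 :=
        Ψval p.1.1 p.2.1 _
      rw [e1, h0, map_zero, zero_add, Pi.single_eq_same, one_smul]
    have key2 : ∀ p : T, ∀ c' : Fin m → D, (Ψ p).1 (Fin.snoc c' 0) = p.1.1 c' := by
      intro p c'
      have h1 : (Fin.snoc c' 0 : Fin (m+1) → D) ∘ Fin.castSucc = c' := by
        funext j; simp
      have e1 : (Ψ p).1 (Fin.snoc c' 0)
          = p.1.1 ((Fin.snoc c' 0 : Fin (m+1) → D) ∘ Fin.castSucc)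
            + (Fin.snoc c' 0 : Fin (m+1) → D) (Fin.last m) • p.2.1 :=
        Ψval p.1.1 p.2.1 _
      rw [e1, h1, Fin.snoc_last, zero_smul, add_zero]
    have hΨinj : Function.Injective Ψ := by
      intro p₁ p₂ h
      have hval : (Ψ p₁).1 = (Ψ p₂).1 := congrArg Subtype.val h
      have hg : p₁.1.1 = p₂.1.1 := LinearMap.ext fun c' =>
        (key2 p₁ c').symm.trans (by rw [hval]; exact key2 p₂ c')
      have hw : p₁.2.1 = p₂.2.1 :=
        (key1 p₁).symm.trans (by rw [hval]; exact key1 p₂)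
      obtain ⟨⟨g₁, hg₁⟩, ⟨w₁, hw₁⟩⟩ := p₁
      obtain ⟨⟨g₂, hg₂⟩, ⟨w₂, hw₂⟩⟩ := p₂
      have hg' : g₁ = g₂ := hg
      subst hg'
      have hw' : w₁ = w₂ := hw
      subst hw'
      rfl
    -- cardinalities
    haveI : Fintype {g' : (Fin m → D) →ₗ[D] W // Function.Injective g'} := Fintype.ofFinite _
    haveI : ∀ g' : {g' : (Fin m → D) →ₗ[D] W // Function.Injective g'},
        Fintype {w : W // w ∉ Set.range g'.1} := fun g' => Fintype.ofFinite _
    have fiber_bound : ∀ g' : {g' : (Fin m → D) →ₗ[D] W // Function.Injective g'},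
        Nat.card W - Nat.card D ^ m ≤ Nat.card {w : W // w ∉ Set.range g'.1} := by
      intro g'
      have h1 : Nat.card {w : W // w ∉ Set.range g'.1}
          = Nat.card ((Set.range g'.1 : Set W)ᶜ : Set W) :=
        Nat.card_congr (Equiv.subtypeEquivRight fun w => by simp)
      have h2 := Set.ncard_add_ncard_compl (Set.range g'.1)
      have h3 : Nat.card (Set.range g'.1) ≤ Nat.card D ^ m := by
        refine le_trans (Finite.card_range_le _) ?_
        rw [Nat.card_fun]
        simp
      rw [h1, Nat.card_coe_set_eq]
      have h4 := Nat.card_coe_set_eq (Set.range g'.1)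
      omega
    calc ∏ j ∈ Finset.range (m+1), (Nat.card W - Nat.card D ^ j)
        = (∏ j ∈ Finset.range m, (Nat.card W - Nat.card D ^ j))
            * (Nat.card W - Nat.card D ^ m) := Finset.prod_range_succ _ _
      _ ≤ Nat.card {g' : (Fin m → D) →ₗ[D] W // Function.Injective g'}
            * (Nat.card W - Nat.card D ^ m) := Nat.mul_le_mul_right _ ih
      _ ≤ Nat.card T := by
          have : Nat.card T = ∑ g' : {g' : (Fin m → D) →ₗ[D] W // Function.Injective g'},
              Nat.card {w : W // w ∉ Set.range g'.1} := by
            rw [Nat.card_eq_fintype_card, Fintype.card_sigma]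
            exact Finset.sum_congr rfl fun x _ => Nat.card_eq_fintype_card.symm
          have hb := Finset.card_nsmul_le_sum Finset.univ
            (fun g' : {g' : (Fin m → D) →ₗ[D] W // Function.Injective g'} =>
              Nat.card {w : W // w ∉ Set.range g'.1})
            (Nat.card W - Nat.card D ^ m) (fun x _ => fiber_bound x)
          rw [this, Nat.card_eq_fintype_card]
          simpa [Finset.card_univ, smul_eq_mul] using hb
      _ ≤ Nat.card {g : (Fin (m+1) → D) →ₗ[D] W // Function.Injective g} :=
          Nat.card_le_card_of_injective Ψ hΨinj

/-! ### Generating tuples vs injective linear maps over the endomorphism ring -/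

section Phi

variable (R : Type*) [Ring R] {E : Type*} [AddCommGroup E] [Module R E] {m : ℕ}

/-- The linear map over the endomorphism ring associated to a tuple `y`. -/
noncomputable def genPhi (y : Fin m → Fin m → E) :
    (Fin m → Module.End R E) →ₗ[Module.End R E] (Fin m → E) where
  toFun c := fun i => ∑ j, c j (y i j)
  map_add' c c' := by
    funext i
    show ∑ j, (c j + c' j) (y i j) = _
    simp [Finset.sum_add_distrib]
  map_smul' d c := by
    funext i
    show ∑ j, (d * c j) (y i j) = d ((fun i => ∑ j, c j (y i j)) i)
    rw [map_sum]
    rfl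

theorem genPhi_apply (y : Fin m → Fin m → E) (c : Fin m → Module.End R E) (i : Fin m) :
    genPhi R y c i = ∑ j, c j (y i j) := rfl

theorem genPhi_single_apply (y : Fin m → Fin m → E) (j i : Fin m) :
    genPhi R y (Pi.single j 1) i = y i j := by
  classical
  rw [genPhi_apply]
  rw [Finset.sum_eq_single j]
  · rw [Pi.single_eq_same, Module.End.one_apply]
  · intro b _ hb
    rw [Pi.single_eq_of_ne hb, LinearMap.zero_apply]
  · intro h; exact absurd (Finset.mem_univ j) h

theorem genPhi_injective : Function.Injective (genPhi R (E := E) (m := m)) := by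
  intro y y' h
  funext i j
  rw [← genPhi_single_apply R y j i, ← genPhi_single_apply R y' j i, h]

theorem span_eq_top_iff_genPhi_injective [IsSemisimpleModule R (Fin m → E)]
    (y : Fin m → Fin m → E) :
    Submodule.span R (Set.range y) = ⊤ ↔ Function.Injective (genPhi R y) := by
  classical
  constructor
  · intro hspan
    rw [← LinearMap.ker_eq_bot, LinearMap.ker_eq_bot']
    intro c hc
    set φ : (Fin m → E) →ₗ[R] E := ∑ j, (c j).comp (LinearMap.proj j) with hφ
    have hφv : ∀ v : Fin m → E, φ v = ∑ j, c j (v j) := fun v => by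
      rw [hφ, LinearMap.sum_apply]
      exact Finset.sum_congr rfl fun j _ => rfl
    have hker : Submodule.span R (Set.range y) ≤ LinearMap.ker φ := by
      rw [Submodule.span_le]
      rintro _ ⟨i, rfl⟩
      rw [SetLike.mem_coe, LinearMap.mem_ker, hφv]
      exact congrFun hc i
    have hφ0 : φ = 0 := LinearMap.ker_eq_top.mp (top_unique (hspan ▸ hker))
    funext j
    apply LinearMap.ext
    intro x
    have h1 : φ (Pi.single j x) = c j x := by
      rw [hφv]
      rw [Finset.sum_eq_single j]
      · rw [Pi.single_eq_same]
      · intro b _ hb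
        rw [Pi.single_eq_of_ne hb, map_zero]
      · intro h; exact absurd (Finset.mem_univ j) h
    rw [show c j x = φ (Pi.single j x) from h1.symm, hφ0]
    rfl
  · intro hinj
    by_contra hspan
    obtain ⟨P, hP⟩ := exists_isCompl (Submodule.span R (Set.range y))
    have hPne : P ≠ ⊥ := by
      rintro rfl
      exact hspan (by simpa using hP.codisjoint.eq_top)
    obtain ⟨p, hpP, hp0⟩ := Submodule.exists_mem_ne_zero_of_ne_bot hPne
    obtain ⟨j₀, hj₀⟩ : ∃ j, p j ≠ 0 := by
      by_contra h
      push_neg at h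
      exact hp0 (funext h)
    set π := Submodule.projectionOnto P (Submodule.span R (Set.range y)) hP.symm with hπ
    set φ : (Fin m → E) →ₗ[R] E :=
      (LinearMap.proj j₀).comp (P.subtype.comp π) with hφ
    set c : Fin m → Module.End R E :=
      fun j => φ.comp (LinearMap.single R (fun _ => E) j) with hc
    have hcval : ∀ j x, c j x = φ (Pi.single j x) := fun j x => rfl
    have hφspan : ∀ v ∈ Submodule.span R (Set.range y), φ v = 0 := by
      intro v hv
      rw [hφ]
      have h0 : π v = 0 := Submodule.projectionOnto_apply_right hP.symm ⟨v, hv⟩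
      simp [h0]
    have hczero : genPhi R y c = 0 := by
      funext i
      rw [genPhi_apply]
      have h2 : ∀ j : Fin m, c j (y i j) = φ (Pi.single j (y i j)) := fun j => rfl
      rw [Finset.sum_congr rfl fun j _ => h2 j, ← map_sum, Finset.univ_sum_single]
      exact hφspan (y i) (Submodule.subset_span ⟨i, rfl⟩)
    have hcne : c ≠ 0 := by
      intro h0
      have hφp : φ p = p j₀ := by
        have hproj : π p = ⟨p, hpP⟩ :=
          Submodule.projectionOnto_apply_left hP.symm ⟨p, hpP⟩
        rw [hφ, LinearMap.comp_apply, LinearMap.comp_apply, hproj]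
        rfl
      have hφp0 : φ p = 0 := by
        conv_lhs => rw [← Finset.univ_sum_single p]
        rw [map_sum]
        apply Finset.sum_eq_zero
        intro j _
        rw [← hcval, h0]
        rfl
      exact hj₀ (hφp.symm.trans hφp0)
    exact hcne (hinj (by rw [hczero, map_zero]))

end Phi

/-! ### The main theorem -/

theorem main_aux (R : Type*) [Ring R] [Finite R] [IsSemisimpleRing R]
    (E : Type*) [AddCommGroup E] [Module R E] [IsSimpleModule R E] (m : ℕ) :
    (∏ j ∈ Finset.Icc 1 m, (1 - 1 / (Nat.card E : ℝ) ^ j)) * (Nat.card E : ℝ) ^ (m ^ 2) ≤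
      (Nat.card {y : Fin m → (Fin m → E) // Submodule.span R (Set.range y) = ⊤} : ℝ) := by
  classical
  haveI : Nontrivial E := IsSimpleModule.nontrivial R E
  obtain ⟨x₀, hx₀⟩ := exists_ne (0 : E)
  haveI : Finite E :=
    Finite.of_surjective _ (IsSimpleModule.toSpanSingleton_surjective R hx₀)
  haveI : Finite (Module.End R E) :=
    Finite.of_injective (fun f : Module.End R E => (f : E → E)) DFunLike.coe_injective
  haveI : Finite ((Fin m → Module.End R E) →ₗ[Module.End R E] (Fin m → E)) :=
    Finite.of_injective
      (fun g => (g : (Fin m → Module.End R E) → (Fin m → E))) DFunLike.coe_injective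
  -- basic cardinalities
  have h2E : 2 ≤ Nat.card E := by
    haveI : Fintype E := Fintype.ofFinite E
    rw [Nat.card_eq_fintype_card]
    exact Fintype.one_lt_card_iff_nontrivial.mpr ‹_›
  have hDE : Nat.card (Module.End R E) ≤ Nat.card E := by
    refine Nat.card_le_card_of_injective (fun d : Module.End R E => d x₀) ?_
    intro d₁ d₂ hd
    have hd' : d₁ x₀ = d₂ x₀ := hd
    by_contra hne
    have hx : x₀ ∈ LinearMap.ker (d₁ - d₂) := by
      rw [LinearMap.mem_ker, LinearMap.sub_apply, hd', sub_self]
    rcases eq_bot_or_eq_top (LinearMap.ker (d₁ - d₂)) with h | h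
    · rw [h, Submodule.mem_bot] at hx
      exact hx₀ hx
    · exact hne (sub_eq_zero.mp (LinearMap.ker_eq_top.mp h))
  -- genPhi is a bijection
  have hcard_eq : Nat.card ((Fin m → Module.End R E) →ₗ[Module.End R E] (Fin m → E))
      = Nat.card (Fin m → Fin m → E) :=
    Nat.card_congr (LinearEquiv.piRing (Module.End R E) (Fin m → E) (Fin m) ℕ).toEquiv
  have hbij : Function.Bijective (genPhi R (E := E) (m := m)) := by
    rw [Nat.bijective_iff_injective_and_card]
    exact ⟨genPhi_injective R, hcard_eq.symm⟩
  haveI : IsSemisimpleModule R (Fin m → E) := inferInstance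
  have hsub : Nat.card {y : Fin m → (Fin m → E) // Submodule.span R (Set.range y) = ⊤}
      = Nat.card {g : (Fin m → Module.End R E) →ₗ[Module.End R E] (Fin m → E) //
          Function.Injective g} := by
    refine Nat.card_congr ((Equiv.ofBijective _ hbij).subtypeEquiv fun y => ?_)
    exact span_eq_top_iff_genPhi_injective R y
  -- the natural number bound
  have hW : Nat.card (Fin m → E) = Nat.card E ^ m := by
    rw [Nat.card_fun, Nat.card_eq_fintype_card (α := Fin m), Fintype.card_fin]
  have hnat : ∏ j ∈ Finset.range m, (Nat.card E ^ m - Nat.card E ^ j)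
      ≤ Nat.card {g : (Fin m → Module.End R E) →ₗ[Module.End R E] (Fin m → E) //
          Function.Injective g} := by
    have hcnt : ∏ j ∈ Finset.range m,
        (Nat.card (Fin m → E) - Nat.card (Module.End R E) ^ j)
        ≤ Nat.card {g : (Fin m → Module.End R E) →ₗ[Module.End R E] (Fin m → E) //
            Function.Injective g} := by
      letI : DivisionRing (Module.End R E) := Module.End.instDivisionRing
      exact card_injective_linearMap_ge (Module.End R E) (Fin m → E) m
    refine le_trans ?_ hcnt
    rw [hW]
    refine Finset.prod_le_prod' ?_
    intro j _
    exact Nat.sub_le_sub_left (Nat.pow_le_pow_left hDE j) _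
  -- arithmetic over the reals
  have hn1 : 1 ≤ Nat.card E := le_trans (by norm_num) h2E
  have hne : ((Nat.card E : ℝ)) ≠ 0 := by
    have : (0:ℝ) < Nat.card E := by exact_mod_cast lt_of_lt_of_le (by norm_num) h2E
    exact this.ne'
  have key : (∏ j ∈ Finset.Icc 1 m, (1 - 1 / (Nat.card E : ℝ) ^ j)) * (Nat.card E : ℝ) ^ (m ^ 2)
      = ∏ j ∈ Finset.Icc 1 m, ((Nat.card E ^ m - Nat.card E ^ (m - j) : ℕ) : ℝ) := by
    have hm2 : (Nat.card E : ℝ) ^ (m ^ 2) = ∏ _j ∈ Finset.Icc 1 m, (Nat.card E : ℝ) ^ m := by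
      rw [Finset.prod_const, Nat.card_Icc, Nat.add_sub_cancel, ← pow_mul, pow_two m]
    rw [hm2, ← Finset.prod_mul_distrib]
    refine Finset.prod_congr rfl fun j hj => ?_
    obtain ⟨hj1, hjm⟩ := Finset.mem_Icc.mp hj
    rw [Nat.cast_sub (Nat.pow_le_pow_right hn1 (Nat.sub_le m j)), Nat.cast_pow, Nat.cast_pow,
      pow_sub₀ _ hne hjm, sub_mul, one_mul, one_div]
    ring
  have reindexN : ∏ j ∈ Finset.Icc 1 m, (Nat.card E ^ m - Nat.card E ^ (m - j))
      = ∏ i ∈ Finset.range m, (Nat.card E ^ m - Nat.card E ^ i) := by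
    refine Finset.prod_nbij' (fun j => m - j) (fun i => m - i) ?_ ?_ ?_ ?_ ?_
    · intro j hj
      obtain ⟨h1, h2⟩ := Finset.mem_Icc.mp hj
      exact Finset.mem_range.mpr (by omega)
    · intro i hi
      have := Finset.mem_range.mp hi
      exact Finset.mem_Icc.mpr (by omega)
    · intro j hj
      obtain ⟨h1, h2⟩ := Finset.mem_Icc.mp hj
      omega
    · intro i hi
      have := Finset.mem_range.mp hi
      omega
    · intro j hj
      rfl
  have final : ∏ j ∈ Finset.Icc 1 m, (Nat.card E ^ m - Nat.card E ^ (m - j))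
      ≤ Nat.card {y : Fin m → (Fin m → E) // Submodule.span R (Set.range y) = ⊤} := by
    rw [reindexN, hsub]
    exact hnat
  rw [key]
  rw [show ∏ j ∈ Finset.Icc 1 m, ((Nat.card E ^ m - Nat.card E ^ (m - j) : ℕ) : ℝ)
      = ((∏ j ∈ Finset.Icc 1 m, (Nat.card E ^ m - Nat.card E ^ (m - j) : ℕ) : ℕ) : ℝ) from
    (Nat.cast_prod _ _).symm]
  exact_mod_cast final

/-- Let `J` be a finite group, `q` a prime not dividing `|J|`, and `E` a nonzero irreducible
(simple) module over the group algebra `𝔽_q[J]`.  Then for every `m ≥ 1` the number of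
`m`-tuples of elements of `E^m` which generate `E^m` as an `𝔽_q[J]`-module is at least
`∏_{j=1}^m (1 - |E|^{-j}) · |E|^{m²}`. -/
theorem count_generating_tuples_of_isotypic
    (J : Type*) [Group J] [Finite J] (q : ℕ) (hq : q.Prime) (hqJ : ¬ q ∣ Nat.card J)
    (E : Type*) [AddCommGroup E] [Module (MonoidAlgebra (ZMod q) J) E]
    [IsSimpleModule (MonoidAlgebra (ZMod q) J) E]
    (m : ℕ) (hm : 1 ≤ m) :
    (∏ j ∈ Finset.Icc 1 m, (1 - 1 / (Nat.card E : ℝ) ^ j)) * (Nat.card E : ℝ) ^ (m ^ 2) ≤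
      (Nat.card {y : Fin m → (Fin m → E) //
        Submodule.span (MonoidAlgebra (ZMod q) J) (Set.range y) = ⊤} : ℝ) := by
  haveI : NeZero q := ⟨hq.ne_zero⟩
  haveI : Fact q.Prime := ⟨hq⟩
  haveI : Finite (MonoidAlgebra (ZMod q) J) :=
    Finite.of_equiv _ (MonoidAlgebra.coeffEquiv.trans Finsupp.equivFunOnFinite).symm
  haveI : IsSemisimpleRing (MonoidAlgebra (ZMod q) J) := aux_isSemisimpleRing q hq J hqJ
  exact main_aux (MonoidAlgebra (ZMod q) J) E m
end

section
/- Let J be a finite group, f : F → J a surjective homomorphism with kernel K, and q > |J| a prime. Let K' = K/[K,K]K^q = H_1(K; 𝔽_q), regarded as an 𝔽_q[J]-module via the conjugation action of F on K. Let E be an irreducible 𝔽_q[J]-module, let K'_E be the E-isotypic component of K' and π_E : K' → K'_E the canonical projection, and let G = E ⋊ J be the semidirect product for the given action, with its natural projection G → J. Then for any finite tuple R of elements of F, there exists a surjective homomorphism F/⟪R⟫ ↠ G carrying f if and only if every entry of R lies in K and the images under π_E of the classes in K' of the entries of R do not generate K'_E as an 𝔽_q[J]-module. -/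
open Function
open scoped commutatorElement

/-- The action of `J` by multiplicative automorphisms on (the multiplicative version of) a
module `E` over the group algebra `𝔽_q[J]`, given by the module structure. -/
noncomputable def jMulAut (q : ℕ) (J : Type*) [Group J] (E : Type*) [AddCommGroup E]
    [Module (MonoidAlgebra (ZMod q) J) E] : J →* MulAut (Multiplicative E) where
  toFun j :=
    { toFun := fun e => Multiplicative.ofAdd (MonoidAlgebra.of (ZMod q) J j • e.toAdd)
      invFun := fun e => Multiplicative.ofAdd (MonoidAlgebra.of (ZMod q) J j⁻¹ • e.toAdd)
      left_inv := fun e => by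
        show Multiplicative.ofAdd (MonoidAlgebra.of (ZMod q) J j⁻¹ •
          MonoidAlgebra.of (ZMod q) J j • e.toAdd) = e
        rw [← mul_smul, ← map_mul, inv_mul_cancel, map_one, one_smul]
        rfl
      right_inv := fun e => by
        show Multiplicative.ofAdd (MonoidAlgebra.of (ZMod q) J j •
          MonoidAlgebra.of (ZMod q) J j⁻¹ • e.toAdd) = e
        rw [← mul_smul, ← map_mul, mul_inv_cancel, map_one, one_smul]
        rfl
      map_mul' := fun a b => by
        show Multiplicative.ofAdd (MonoidAlgebra.of (ZMod q) J j • (a.toAdd + b.toAdd)) = _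
        rw [smul_add]
        rfl }
  map_one' := by
    ext e
    show Multiplicative.ofAdd (MonoidAlgebra.of (ZMod q) J (1 : J) • e.toAdd) = e
    rw [map_one, one_smul]
    rfl
  map_mul' := fun a b => by
    ext e
    show Multiplicative.ofAdd (MonoidAlgebra.of (ZMod q) J (a * b) • e.toAdd) =
      Multiplicative.ofAdd (MonoidAlgebra.of (ZMod q) J a •
        MonoidAlgebra.of (ZMod q) J b • e.toAdd)
    rw [map_mul, mul_smul]

/-- The sum of all simple submodules of `V` which are not isomorphic to `E`; for a semisimple
module `V` this is the kernel of the canonical projection `π_E` of `V` onto its `E`-isotypic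
component. -/
def nonIsotypicPart (A : Type*) [Ring A] (V : Type*) [AddCommGroup V] [Module A V]
    (E : Type*) [AddCommGroup E] [Module A E] : Submodule A V :=
  sSup {p : Submodule A V | IsSimpleModule A p ∧ ¬ Nonempty (p ≃ₗ[A] E)}

section SDPAux
variable {N H : Type*} [CommGroup N] [Group H] (φ : H →* MulAut N)

lemma sdp_eq_inl {g : N ⋊[φ] H} (hg : g.right = 1) : g = SemidirectProduct.inl g.left := by
  cases g with
  | mk l r => simp only [SemidirectProduct.right] at hg; subst hg; rfl

lemma sdp_conj_inl (g : N ⋊[φ] H) (n : N) :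
    g * SemidirectProduct.inl n * g⁻¹ = SemidirectProduct.inl (φ g.right n) := by
  conv_lhs => rw [← SemidirectProduct.inl_left_mul_inr_right g]
  rw [mul_inv_rev]
  have h1 : (SemidirectProduct.inl g.left : N ⋊[φ] H) * SemidirectProduct.inr g.right *
      SemidirectProduct.inl n * ((SemidirectProduct.inr g.right)⁻¹ *
      (SemidirectProduct.inl g.left)⁻¹) =
      SemidirectProduct.inl g.left * (SemidirectProduct.inr g.right *
      SemidirectProduct.inl n * (SemidirectProduct.inr g.right)⁻¹) *
      (SemidirectProduct.inl g.left)⁻¹ := by group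
  rw [h1, ← map_inv (SemidirectProduct.inr : H →* N ⋊[φ] H) g.right,
    ← SemidirectProduct.inl_aut, ← map_inv (SemidirectProduct.inl : N →* N ⋊[φ] H),
    ← map_mul, ← map_mul]
  congr 1
  rw [mul_comm, inv_mul_cancel_left]
end SDPAux

section LinAux
variable {q : ℕ} {J : Type*} [Group J]

lemma qsmul_zero_aux {E : Type*} [AddCommGroup E]
    [Module (MonoidAlgebra (ZMod q) J) E] (x : E) : q • x = 0 := by
  rw [← Nat.cast_smul_eq_nsmul (MonoidAlgebra (ZMod q) J),
    show ((q : MonoidAlgebra (ZMod q) J)) = 0 by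
      rw [← map_natCast (algebraMap (ZMod q) (MonoidAlgebra (ZMod q) J)) q, ZMod.natCast_self,
        map_zero],
    zero_smul]

lemma mult_pow_q_eq_one (J : Type*) [Group J] {E : Type*} [AddCommGroup E]
    [Module (MonoidAlgebra (ZMod q) J) E] (x : Multiplicative E) : x ^ q = 1 := by
  rw [← ofAdd_toAdd (x ^ q), toAdd_pow, qsmul_zero_aux (q := q) (J := J)]
  rfl

noncomputable def ofEquivariantAddHom [NeZero q] {V W : Type*} [AddCommGroup V] [AddCommGroup W]
    [Module (MonoidAlgebra (ZMod q) J) V] [Module (MonoidAlgebra (ZMod q) J) W]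
    (g : V →+ W)
    (hg : ∀ (j : J) (v : V), g (MonoidAlgebra.of (ZMod q) J j • v) =
      MonoidAlgebra.of (ZMod q) J j • g v) :
    V →ₗ[MonoidAlgebra (ZMod q) J] W where
  toFun := g
  map_add' := g.map_add
  map_smul' := by
    have key : ∀ (r : ZMod q) (x : V),
        g ((algebraMap (ZMod q) (MonoidAlgebra (ZMod q) J) r) • x) =
        (algebraMap (ZMod q) (MonoidAlgebra (ZMod q) J) r) • g x := by
      intro r x
      have hr : (algebraMap (ZMod q) (MonoidAlgebra (ZMod q) J) r) =
          ((r.val : ℕ) : MonoidAlgebra (ZMod q) J) := by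
        rw [← map_natCast (algebraMap (ZMod q) (MonoidAlgebra (ZMod q) J)) r.val,
          ZMod.natCast_val, ZMod.cast_id]
      rw [hr, Nat.cast_smul_eq_nsmul, Nat.cast_smul_eq_nsmul, map_nsmul]
    intro a v
    simp only [RingHom.id_apply]
    induction a using MonoidAlgebra.induction_on with
    | of j => exact hg j v
    | add a b ha hb => rw [add_smul, add_smul, map_add, ha, hb]
    | smul r a ha =>
      rw [Algebra.smul_def, mul_smul, key, ha, mul_smul]
end LinAux

section IsoAux
variable {A : Type*} [Ring A] {V E : Type*} [AddCommGroup V] [Module A V]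
    [AddCommGroup E] [Module A E]

lemma nonIsotypicPart_le_ker [IsSimpleModule A E] (ℓ : V →ₗ[A] E) :
    nonIsotypicPart A V E ≤ LinearMap.ker ℓ := by
  refine sSup_le ?_
  rintro p ⟨hp, hne⟩
  haveI := hp
  set g := ℓ.comp p.subtype with hg
  rcases eq_bot_or_eq_top (LinearMap.range g) with hr | hr
  · intro x hx
    have h2 : g ⟨x, hx⟩ ∈ LinearMap.range g := LinearMap.mem_range_self g _
    rw [hr, Submodule.mem_bot] at h2
    simpa [g] using h2
  · exfalso
    apply hne
    rcases eq_bot_or_eq_top (LinearMap.ker g) with hk | hk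
    · exact ⟨LinearEquiv.ofBijective g ⟨LinearMap.ker_eq_bot.1 hk, LinearMap.range_eq_top.1 hr⟩⟩
    · have hz : g = 0 := LinearMap.ker_eq_top.1 hk
      rw [hz, LinearMap.range_zero] at hr
      exact absurd hr.symm bot_ne_top.symm

lemma exists_surjective_linear [IsSimpleModule A E] [IsSemisimpleModule A V]
    (M : Submodule A V) (hM : M ≠ ⊤) (hle : nonIsotypicPart A V E ≤ M) :
    ∃ ℓ : V →ₗ[A] E, Surjective ℓ ∧ M ≤ LinearMap.ker ℓ := by
  have hex : ∃ S : Submodule A V, IsAtom S ∧ ¬ S ≤ M := by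
    by_contra hcon
    push_neg at hcon
    apply hM
    rw [← top_le_iff, ← sSup_atoms_eq_top (α := Submodule A V)]
    exact sSup_le fun a ha => hcon a ha
  obtain ⟨S, hS, hSM⟩ := hex
  haveI hSsimple : IsSimpleModule A S := isSimpleModule_iff_isAtom.2 hS
  have hSM_bot : S ⊓ M = ⊥ := by
    rcases lt_or_eq_of_le (inf_le_left : S ⊓ M ≤ S) with hlt | heq
    · exact hS.2 _ hlt
    · exact absurd (inf_eq_left.mp heq) hSM
  have hiso : Nonempty (S ≃ₗ[A] E) := by
    by_contra hcontra
    exact hSM ((le_sSup ⟨hSsimple, hcontra⟩ : S ≤ nonIsotypicPart A V E).trans hle)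
  obtain ⟨e⟩ := hiso
  obtain ⟨c, hc⟩ := exists_isCompl (S ⊔ M)
  have h1 : (S ⊔ M) ⊓ (M ⊔ c) = M := by
    rw [inf_comm, sup_inf_assoc_of_le c (le_sup_right : M ≤ S ⊔ M),
      (disjoint_iff.mp hc.disjoint.symm), sup_bot_eq]
  have hcompl : IsCompl (M ⊔ c) S := by
    constructor
    · rw [disjoint_iff, inf_comm, ← inf_eq_left.mpr (le_sup_left : S ≤ S ⊔ M), inf_assoc, h1,
        hSM_bot]
    · rw [codisjoint_iff, sup_comm, ← sup_assoc]
      exact codisjoint_iff.mp hc.codisjoint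
  refine ⟨e.toLinearMap ∘ₗ (Submodule.quotientEquivOfIsCompl (M ⊔ c) S hcompl).toLinearMap ∘ₗ
    (M ⊔ c).mkQ, ?_, ?_⟩
  · exact e.surjective.comp ((Submodule.quotientEquivOfIsCompl (M ⊔ c) S hcompl).surjective.comp
      (Submodule.mkQ_surjective _))
  · intro x hx
    have hx' : x ∈ M ⊔ c := Submodule.mem_sup_left hx
    simp only [LinearMap.mem_ker, LinearMap.comp_apply, Submodule.mkQ_apply]
    rw [(Submodule.Quotient.mk_eq_zero _).mpr hx']
    simp
end IsoAux

theorem exists_surjection_carrying_iff_isotypic_images_do_not_generate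
    (n : ℕ) (hn : 2 ≤ n) (J : Type*) [Group J] [Finite J]
    (f : FreeGroup (Fin n) →* J) (hf : Surjective f)
    (q : ℕ) (hq : q.Prime) (hqJ : Nat.card J < q)
    -- `V` is the `𝔽_q[J]`-module `K' = K/[K,K]K^q`, presented by a `J`-equivariant
    -- surjection `θ : K → V` with kernel `[K,K]K^q`:
    (V : Type*) [AddCommGroup V] [Module (MonoidAlgebra (ZMod q) J) V]
    (θ : (f.ker : Subgroup (FreeGroup (Fin n))) →* Multiplicative V) (hθ : Surjective θ)
    (hker : θ.ker = Subgroup.normalClosure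
      {x : (f.ker : Subgroup (FreeGroup (Fin n))) |
        (∃ a b : (f.ker : Subgroup (FreeGroup (Fin n))), x = ⁅a, b⁆) ∨
        ∃ a : (f.ker : Subgroup (FreeGroup (Fin n))), x = a ^ q})
    (hequiv : ∀ (x : FreeGroup (Fin n)) (k : (f.ker : Subgroup (FreeGroup (Fin n)))),
      θ ⟨x * (k : FreeGroup (Fin n)) * x⁻¹, (MonoidHom.normal_ker f).conj_mem _ k.2 x⟩ =
        Multiplicative.ofAdd (MonoidAlgebra.of (ZMod q) J (f x) • (θ k).toAdd))
    -- `E` is an irreducible `𝔽_q[J]`-module: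
    (E : Type*) [AddCommGroup E] [Module (MonoidAlgebra (ZMod q) J) E]
    [IsSimpleModule (MonoidAlgebra (ZMod q) J) E]
    -- a finite tuple of prospective relators:
    (k : ℕ) (R : Fin k → FreeGroup (Fin n)) :
    -- there is a surjection of `F/⟪R⟫` onto the extension `G = E ⋊ J` carrying `f` iff all
    -- entries of `R` lie in `K` and their classes in `K'`, projected to the `E`-isotypic
    -- component of `K'`, do not generate it (equivalently, the classes together with the
    -- complement of the isotypic component do not generate `K'`):
    (∃ φ : (FreeGroup (Fin n) ⧸ Subgroup.normalClosure (Set.range R)) →*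
        (Multiplicative E ⋊[jMulAut q J E] J),
      Surjective φ ∧
      SemidirectProduct.rightHom.comp
        (φ.comp (QuotientGroup.mk' (Subgroup.normalClosure (Set.range R)))) = f) ↔
    ∃ h : ∀ i, R i ∈ f.ker,
      Submodule.span (MonoidAlgebra (ZMod q) J)
          (Set.range fun i => (θ ⟨R i, h i⟩).toAdd) ⊔
        nonIsotypicPart (MonoidAlgebra (ZMod q) J) V E ≠ ⊤ := by
  haveI := Fact.mk hq
  haveI : IsSemisimpleRing (MonoidAlgebra (ZMod q) (Shrink.{0} J)) := by
    letI : Fintype (Shrink.{0} J) := Fintype.ofFinite _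
    haveI : NeZero ((Fintype.card (Shrink.{0} J)) : ZMod q) := by
      constructor
      have hcard : Fintype.card (Shrink.{0} J) = Nat.card J := by
        rw [← Nat.card_eq_fintype_card]
        exact Nat.card_congr (equivShrink.{0} J).symm
      rw [hcard]
      intro hzero
      rw [ZMod.natCast_eq_zero_iff] at hzero
      have h0 : 0 < Nat.card J := Nat.card_pos
      exact absurd (Nat.le_of_dvd h0 hzero) (not_le.mpr hqJ)
    haveI : NeZero (Nat.card (Shrink.{0} J) : ZMod q) := by rwa [Nat.card_eq_fintype_card]
    infer_instance
  haveI : IsSemisimpleRing (MonoidAlgebra (ZMod q) J) :=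
    RingEquiv.isSemisimpleRing
      (MonoidAlgebra.domCongr (ZMod q) (ZMod q) ((equivShrink.{0} J).symm.mulEquiv : Shrink.{0} J ≃* J)).toRingEquiv
  haveI : Nontrivial E := IsSimpleModule.nontrivial (MonoidAlgebra (ZMod q) J) E
  constructor
  · -- FORWARD DIRECTION
    rintro ⟨φ, hφsurj, hφcarry⟩
    set ψ : FreeGroup (Fin n) →* Multiplicative E ⋊[jMulAut q J E] J :=
      φ.comp (QuotientGroup.mk' (Subgroup.normalClosure (Set.range R))) with hψdef
    have hψcarry : ∀ x, SemidirectProduct.rightHom (ψ x) = f x :=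
      fun x => DFunLike.congr_fun hφcarry x
    have hψsurj : Surjective ψ := hφsurj.comp (QuotientGroup.mk'_surjective _)
    have hψR : ∀ i, ψ (R i) = 1 := by
      intro i
      have hm : (R i) ∈ Subgroup.normalClosure (Set.range R) :=
        Subgroup.subset_normalClosure ⟨i, rfl⟩
      show φ (QuotientGroup.mk' _ (R i)) = 1
      have hone : (QuotientGroup.mk' (Subgroup.normalClosure (Set.range R))) (R i) = 1 :=
        (QuotientGroup.eq_one_iff _).mpr hm
      rw [hone, map_one]
    have h : ∀ i, R i ∈ f.ker := by
      intro i
      rw [MonoidHom.mem_ker, ← hψcarry, hψR, map_one]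
    have hright1 : ∀ kk : (f.ker : Subgroup (FreeGroup (Fin n))),
        (ψ (kk : FreeGroup (Fin n))).right = 1 :=
      fun kk => (hψcarry _).trans (MonoidHom.mem_ker.mp kk.2)
    set g0 : (f.ker : Subgroup (FreeGroup (Fin n))) →* Multiplicative E :=
      MonoidHom.mk' (fun kk => (ψ (kk : FreeGroup (Fin n))).left) (by
        intro a b
        show (ψ ((a : FreeGroup (Fin n)) * b)).left = _
        rw [map_mul, SemidirectProduct.mul_left, hright1 a, map_one]
        rfl) with hg0def
    have hinl : ∀ kk : (f.ker : Subgroup (FreeGroup (Fin n))),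
        ψ (kk : FreeGroup (Fin n)) = SemidirectProduct.inl (g0 kk) :=
      fun kk => sdp_eq_inl _ (hright1 kk)
    have hker_sub : θ.ker ≤ g0.ker := by
      rw [hker]
      apply Subgroup.normalClosure_le_normal
      rintro x (⟨a, b, rfl⟩ | ⟨a, rfl⟩)
      · rw [SetLike.mem_coe, MonoidHom.mem_ker, map_commutatorElement]
        exact commutatorElement_eq_one_iff_commute.mpr (mul_comm _ _)
      · rw [SetLike.mem_coe, MonoidHom.mem_ker, map_pow]
        exact mult_pow_q_eq_one J _
    have hfactor : ∀ k₁ k₂ : (f.ker : Subgroup (FreeGroup (Fin n))),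
        θ k₁ = θ k₂ → g0 k₁ = g0 k₂ := by
      intro k₁ k₂ hk12
      have h1 : k₁ * k₂⁻¹ ∈ θ.ker := by
        rw [MonoidHom.mem_ker, map_mul, map_inv, hk12, mul_inv_cancel]
      have h2 := hker_sub h1
      rw [MonoidHom.mem_ker, map_mul, map_inv] at h2
      exact mul_inv_eq_one.mp h2
    set ℓfun : V → E := fun v => (g0 (surjInv hθ (Multiplicative.ofAdd v))).toAdd with hℓfundef
    have hℓg0 : ∀ kk : (f.ker : Subgroup (FreeGroup (Fin n))),
        ℓfun (θ kk).toAdd = (g0 kk).toAdd := by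
      intro kk
      have h1 : θ (surjInv hθ (Multiplicative.ofAdd (θ kk).toAdd)) = θ kk := by
        rw [surjInv_eq hθ, ofAdd_toAdd]
      exact congrArg Multiplicative.toAdd (hfactor _ _ h1)
    have hadd : ∀ v w : V, ℓfun (v + w) = ℓfun v + ℓfun w := by
      intro v w
      obtain ⟨kv, hkv⟩ := hθ (Multiplicative.ofAdd v)
      obtain ⟨kw, hkw⟩ := hθ (Multiplicative.ofAdd w)
      have hv : (θ kv).toAdd = v := by rw [hkv]; rfl
      have hw : (θ kw).toAdd = w := by rw [hkw]; rfl
      have h1 : (θ (kv * kw)).toAdd = v + w := by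
        rw [map_mul, toAdd_mul, hv, hw]
      rw [← h1, hℓg0, map_mul, toAdd_mul, ← hv, ← hw, hℓg0, hℓg0]
    have hequivℓ : ∀ (j : J) (v : V),
        ℓfun (MonoidAlgebra.of (ZMod q) J j • v) = MonoidAlgebra.of (ZMod q) J j • ℓfun v := by
      intro j v
      obtain ⟨x, hx⟩ := hf j
      obtain ⟨kv, hkv⟩ := hθ (Multiplicative.ofAdd v)
      have hv : (θ kv).toAdd = v := by rw [hkv]; rfl
      have hmem : x * (kv : FreeGroup (Fin n)) * x⁻¹ ∈ f.ker :=
        (MonoidHom.normal_ker f).conj_mem _ kv.2 x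
      have h1 := hequiv x kv
      have h2 : (θ ⟨x * (kv : FreeGroup (Fin n)) * x⁻¹, hmem⟩).toAdd =
          MonoidAlgebra.of (ZMod q) J j • v := by
        rw [h1, hx, hv]
        rfl
      rw [← h2, hℓg0]
      -- compute g0 of the conjugate
      have h3 : ψ (x * (kv : FreeGroup (Fin n)) * x⁻¹) =
          SemidirectProduct.inl ((jMulAut q J E) (ψ x).right (g0 kv)) := by
        rw [map_mul, map_mul, map_inv, hinl kv]
        exact sdp_conj_inl _ (ψ x) (g0 kv)
      have h4 : g0 ⟨x * (kv : FreeGroup (Fin n)) * x⁻¹, hmem⟩ =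
          (jMulAut q J E) (ψ x).right (g0 kv) := by
        show (ψ (x * (kv : FreeGroup (Fin n)) * x⁻¹)).left = _
        rw [h3, SemidirectProduct.left_inl]
      rw [h4]
      have h5 : (ψ x).right = j := (hψcarry x).trans hx
      rw [h5]
      show (MonoidAlgebra.of (ZMod q) J j • (g0 kv).toAdd) = _
      rw [← hv, hℓg0]
    haveI : NeZero q := ⟨hq.ne_zero⟩
    set ℓ : V →ₗ[MonoidAlgebra (ZMod q) J] E :=
      ofEquivariantAddHom (AddMonoidHom.mk' ℓfun hadd) hequivℓ with hℓdef
    have hℓapp : ∀ v, ℓ v = ℓfun v := fun v => rfl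
    have hℓsurj : Surjective ℓ := by
      intro e
      obtain ⟨x, hx⟩ := hψsurj (SemidirectProduct.inl (Multiplicative.ofAdd e))
      have hxker : x ∈ f.ker := by
        rw [MonoidHom.mem_ker, ← hψcarry x, hx, SemidirectProduct.rightHom_inl]
      refine ⟨(θ ⟨x, hxker⟩).toAdd, ?_⟩
      rw [hℓapp, hℓg0]
      show ((ψ ((⟨x, hxker⟩ : f.ker) : FreeGroup (Fin n))).left).toAdd = e
      rw [show ((⟨x, hxker⟩ : f.ker) : FreeGroup (Fin n)) = x from rfl, hx,
        SemidirectProduct.left_inl]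
      rfl
    refine ⟨h, ?_⟩
    intro hcon
    have hle : Submodule.span (MonoidAlgebra (ZMod q) J)
        (Set.range fun i => (θ ⟨R i, h i⟩).toAdd) ⊔
        nonIsotypicPart (MonoidAlgebra (ZMod q) J) V E ≤ LinearMap.ker ℓ := by
      refine sup_le ?_ (nonIsotypicPart_le_ker ℓ)
      rw [Submodule.span_le]
      rintro _ ⟨i, rfl⟩
      rw [SetLike.mem_coe, LinearMap.mem_ker, hℓapp, hℓg0]
      show ((ψ ((⟨R i, h i⟩ : f.ker) : FreeGroup (Fin n))).left).toAdd = 0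
      rw [show ((⟨R i, h i⟩ : f.ker) : FreeGroup (Fin n)) = R i from rfl, hψR i]
      rfl
    rw [hcon, top_le_iff] at hle
    have hzero : ℓ = 0 := LinearMap.ker_eq_top.mp hle
    obtain ⟨e, he⟩ := exists_ne (0 : E)
    obtain ⟨w, hw⟩ := hℓsurj e
    rw [hzero] at hw
    exact he (by simpa using hw.symm)
  · -- BACKWARD DIRECTION
    rintro ⟨h, hne⟩
    obtain ⟨ℓ, hℓsurj, hMle⟩ := exists_surjective_linear
      (Submodule.span (MonoidAlgebra (ZMod q) J)
        (Set.range fun i => (θ ⟨R i, h i⟩).toAdd) ⊔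
        nonIsotypicPart (MonoidAlgebra (ZMod q) J) V E) hne le_sup_right
    set lam : (f.ker : Subgroup (FreeGroup (Fin n))) →* Multiplicative E :=
      MonoidHom.mk' (fun kk => Multiplicative.ofAdd (ℓ (θ kk).toAdd)) (by
        intro a b
        show Multiplicative.ofAdd (ℓ (θ (a * b)).toAdd) = _
        rw [map_mul, toAdd_mul, map_add]
        rfl) with hlamdef
    have hlam_conj : ∀ (x : FreeGroup (Fin n)) (kk : (f.ker : Subgroup (FreeGroup (Fin n))))
        (hm : x * (kk : FreeGroup (Fin n)) * x⁻¹ ∈ f.ker),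
        lam ⟨x * (kk : FreeGroup (Fin n)) * x⁻¹, hm⟩ =
          Multiplicative.ofAdd (MonoidAlgebra.of (ZMod q) J (f x) • (lam kk).toAdd) := by
      intro x kk hm
      show Multiplicative.ofAdd (ℓ (θ ⟨x * (kk : FreeGroup (Fin n)) * x⁻¹, hm⟩).toAdd) = _
      rw [hequiv x kk]
      rw [toAdd_ofAdd, map_smul]
      rfl
    set N : Subgroup (FreeGroup (Fin n)) := Subgroup.map f.ker.subtype lam.ker with hNdef
    haveI hNnormal : N.Normal := by
      constructor
      intro m hm x
      rw [hNdef, Subgroup.mem_map] at hm ⊢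
      obtain ⟨kk, hk, rfl⟩ := hm
      have hmem : x * (kk : FreeGroup (Fin n)) * x⁻¹ ∈ f.ker :=
        (MonoidHom.normal_ker f).conj_mem _ kk.2 x
      refine ⟨⟨x * (kk : FreeGroup (Fin n)) * x⁻¹, hmem⟩, ?_, rfl⟩
      rw [MonoidHom.mem_ker, hlam_conj x kk hmem]
      rw [MonoidHom.mem_ker] at hk
      rw [hk]
      simp
    have hNle : N ≤ f.ker := Subgroup.map_subtype_le lam.ker
    have hNle' : N ≤ f.ker := hNle
    set π : (FreeGroup (Fin n) ⧸ N) →* J := QuotientGroup.lift N f hNle' with hπdef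
    have hπmk : ∀ x : FreeGroup (Fin n), π (QuotientGroup.mk x) = f x := fun _ => rfl
    have hπsurj : Surjective π := by
      intro j
      obtain ⟨x, hx⟩ := hf j
      exact ⟨QuotientGroup.mk x, hx⟩
    have hmem_out : ∀ a : π.ker, ((a : FreeGroup (Fin n) ⧸ N)).out ∈ f.ker := by
      intro a
      rw [MonoidHom.mem_ker]
      have h1 : π (QuotientGroup.mk ((a : FreeGroup (Fin n) ⧸ N)).out) =
          f ((a : FreeGroup (Fin n) ⧸ N)).out := rfl
      rw [QuotientGroup.out_eq'] at h1
      rw [← h1]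
      exact MonoidHom.mem_ker.mp a.2
    have hcong : ∀ (k₁ k₂ : (f.ker : Subgroup (FreeGroup (Fin n)))),
        (QuotientGroup.mk (k₁ : FreeGroup (Fin n)) : FreeGroup (Fin n) ⧸ N) =
          QuotientGroup.mk (k₂ : FreeGroup (Fin n)) → lam k₁ = lam k₂ := by
      intro k₁ k₂ h12
      have hmem : ((k₁ : FreeGroup (Fin n)))⁻¹ * (k₂ : FreeGroup (Fin n)) ∈ N :=
        QuotientGroup.eq.mp h12
      rw [hNdef, Subgroup.mem_map] at hmem
      obtain ⟨kk, hk, hkeq⟩ := hmem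
      have h2 : k₂ = k₁ * kk := by
        apply Subtype.ext
        show (k₂ : FreeGroup (Fin n)) = (k₁ : FreeGroup (Fin n)) * (kk : FreeGroup (Fin n))
        rw [show ((kk : FreeGroup (Fin n))) = ((k₁ : FreeGroup (Fin n)))⁻¹ *
          (k₂ : FreeGroup (Fin n)) from hkeq]
        group
      rw [h2, map_mul, MonoidHom.mem_ker.mp hk, mul_one]
    set lamQ : π.ker →* Multiplicative E :=
      MonoidHom.mk' (fun a => lam ⟨((a : FreeGroup (Fin n) ⧸ N)).out, hmem_out a⟩) (by
        intro a b
        have h1 : (QuotientGroup.mk (((a * b : π.ker) : FreeGroup (Fin n) ⧸ N)).out :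
            FreeGroup (Fin n) ⧸ N) =
            QuotientGroup.mk (((a : FreeGroup (Fin n) ⧸ N)).out *
              ((b : FreeGroup (Fin n) ⧸ N)).out) := by
          rw [QuotientGroup.out_eq']
          have : (QuotientGroup.mk (((a : FreeGroup (Fin n) ⧸ N)).out *
              ((b : FreeGroup (Fin n) ⧸ N)).out) : FreeGroup (Fin n) ⧸ N) =
              QuotientGroup.mk ((a : FreeGroup (Fin n) ⧸ N)).out *
              QuotientGroup.mk ((b : FreeGroup (Fin n) ⧸ N)).out := rfl
          rw [this, QuotientGroup.out_eq', QuotientGroup.out_eq']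
          rfl
        have h2 := hcong ⟨(((a * b : π.ker) : FreeGroup (Fin n) ⧸ N)).out, hmem_out (a * b)⟩
          ⟨((a : FreeGroup (Fin n) ⧸ N)).out * ((b : FreeGroup (Fin n) ⧸ N)).out,
            mul_mem (hmem_out a) (hmem_out b)⟩ h1
        exact h2.trans (map_mul lam ⟨((a : FreeGroup (Fin n) ⧸ N)).out, hmem_out a⟩
          ⟨((b : FreeGroup (Fin n) ⧸ N)).out, hmem_out b⟩)) with hlamQdef
    have hlamQ_mk : ∀ (kk : (f.ker : Subgroup (FreeGroup (Fin n))))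
        (hm : (QuotientGroup.mk (kk : FreeGroup (Fin n)) : FreeGroup (Fin n) ⧸ N) ∈ π.ker),
        lamQ ⟨QuotientGroup.mk (kk : FreeGroup (Fin n)), hm⟩ = lam kk := by
      intro kk hm
      exact hcong _ _ (by rw [QuotientGroup.out_eq'])
    have hlamQinj : Injective lamQ := by
      refine (injective_iff_map_eq_one lamQ).mpr ?_
      intro a ha
      have hmemN : ((a : FreeGroup (Fin n) ⧸ N)).out ∈ N :=
        ⟨⟨((a : FreeGroup (Fin n) ⧸ N)).out, hmem_out a⟩, MonoidHom.mem_ker.mpr ha, rfl⟩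
      have h1 : (QuotientGroup.mk ((a : FreeGroup (Fin n) ⧸ N)).out :
          FreeGroup (Fin n) ⧸ N) = 1 := (QuotientGroup.eq_one_iff _).mpr hmemN
      rw [QuotientGroup.out_eq'] at h1
      exact Subtype.ext h1
    have hlamsurj : Surjective lam := by
      intro e
      obtain ⟨v, hv⟩ := hℓsurj e.toAdd
      obtain ⟨kk, hk⟩ := hθ (Multiplicative.ofAdd v)
      refine ⟨kk, ?_⟩
      show Multiplicative.ofAdd (ℓ (θ kk).toAdd) = e
      rw [hk, toAdd_ofAdd, hv, ofAdd_toAdd]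
    have hlamQsurj : Surjective lamQ := by
      intro e
      obtain ⟨kk, hk⟩ := hlamsurj e
      have hm : (QuotientGroup.mk (kk : FreeGroup (Fin n)) : FreeGroup (Fin n) ⧸ N) ∈ π.ker := by
        rw [MonoidHom.mem_ker]
        exact MonoidHom.mem_ker.mp kk.2
      exact ⟨⟨QuotientGroup.mk (kk : FreeGroup (Fin n)), hm⟩, (hlamQ_mk kk hm).trans hk⟩
    set μ : π.ker ≃* Multiplicative E := MulEquiv.ofBijective lamQ ⟨hlamQinj, hlamQsurj⟩
      with hμdef
    -- finiteness of E
    haveI : Finite E := by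
      obtain ⟨e0, he0⟩ := exists_ne (0 : E)
      have hsp : Submodule.span (MonoidAlgebra (ZMod q) J) {e0} = ⊤ := by
        rcases eq_bot_or_eq_top (Submodule.span (MonoidAlgebra (ZMod q) J) {e0}) with hb | ht
        · exfalso
          apply he0
          have hmem := Submodule.mem_span_singleton_self (R := MonoidAlgebra (ZMod q) J) e0
          rw [hb, Submodule.mem_bot] at hmem
          exact hmem
        · exact ht
      haveI : Finite (MonoidAlgebra (ZMod q) J) := by
        letI : Fintype J := Fintype.ofFinite J
        exact Finite.of_surjective (fun g : J → ZMod q =>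
          (MonoidAlgebra.ofCoeff (Finsupp.equivFunOnFinite.symm g) : MonoidAlgebra (ZMod q) J))
          (fun x => ⟨Finsupp.equivFunOnFinite x.coeff, by simp⟩)
      have hsurj0 : Surjective (LinearMap.toSpanSingleton (MonoidAlgebra (ZMod q) J) E e0) := by
        rw [← LinearMap.range_eq_top, ← LinearMap.span_singleton_eq_range]
        exact hsp
      exact Finite.of_surjective _ hsurj0
    haveI : Finite π.ker := Finite.of_equiv _ μ.toEquiv.symm
    -- coprimality via p-groups
    have hpE : IsPGroup q (Multiplicative E) := fun g =>
      ⟨1, by rw [pow_one]; exact mult_pow_q_eq_one J g⟩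
    have hpker : IsPGroup q π.ker := hpE.of_equiv μ.symm
    have hcop : Nat.Coprime (Nat.card π.ker) π.ker.index := by
      obtain ⟨m, hm⟩ := hpker.exists_card_eq
      rw [hm, Subgroup.index_ker, MonoidHom.range_eq_top.mpr hπsurj, Subgroup.card_top]
      refine Nat.Coprime.pow_left m ?_
      rw [Nat.Prime.coprime_iff_not_dvd hq]
      intro hdvd
      have h0 : 0 < Nat.card J := Nat.card_pos
      exact absurd (Nat.le_of_dvd h0 hdvd) (not_le.mpr hqJ)
    obtain ⟨H, hH⟩ := Subgroup.exists_right_complement'_of_coprime hcop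
    -- the complement maps isomorphically to J
    set ν : H →* J := π.comp H.subtype with hνdef
    have hνinj : Injective ν := by
      refine (injective_iff_map_eq_one ν).mpr ?_
      intro a ha
      have hmem : (a : FreeGroup (Fin n) ⧸ N) ∈ π.ker ⊓ H :=
        Subgroup.mem_inf.mpr ⟨MonoidHom.mem_ker.mpr ha, a.2⟩
      rw [disjoint_iff.mp hH.disjoint, Subgroup.mem_bot] at hmem
      exact Subtype.ext hmem
    have hνsurj : Surjective ν := by
      intro j
      obtain ⟨y, hy⟩ := hπsurj j
      obtain ⟨⟨a, h0⟩, hprod⟩ := hH.2 y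
      refine ⟨⟨(h0 : FreeGroup (Fin n) ⧸ N), h0.2⟩, ?_⟩
      have ha1 : π (a : FreeGroup (Fin n) ⧸ N) = 1 :=
        MonoidHom.mem_ker.mp (SetLike.mem_coe.mp a.2)
      have hprod' : (a : FreeGroup (Fin n) ⧸ N) * (h0 : FreeGroup (Fin n) ⧸ N) = y := hprod
      have h2 : π y = π ((a : FreeGroup (Fin n) ⧸ N) * (h0 : FreeGroup (Fin n) ⧸ N)) := by
        rw [hprod']
      rw [map_mul, ha1, one_mul] at h2
      show π (h0 : FreeGroup (Fin n) ⧸ N) = j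
      rw [← h2, hy]
    set νiso : H ≃* J := MulEquiv.ofBijective ν ⟨hνinj, hνsurj⟩ with hνisodef
    set f₁ : Multiplicative E →* (FreeGroup (Fin n) ⧸ N) :=
      π.ker.subtype.comp μ.symm.toMonoidHom with hf₁def
    set f₂ : J →* (FreeGroup (Fin n) ⧸ N) :=
      H.subtype.comp νiso.symm.toMonoidHom with hf₂def
    have hπf₂ : ∀ j : J, π (f₂ j) = j := by
      intro j
      show π ((νiso.symm j : H) : FreeGroup (Fin n) ⧸ N) = j
      exact νiso.apply_symm_apply j
    have hcompat : ∀ j : J, f₁.comp ((jMulAut q J E) j).toMonoidHom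
        = (MulAut.conj (f₂ j)).toMonoidHom.comp f₁ := by
      intro j
      ext e
      show ((μ.symm ((jMulAut q J E j) e)) : FreeGroup (Fin n) ⧸ N) =
        f₂ j * ((μ.symm e) : FreeGroup (Fin n) ⧸ N) * (f₂ j)⁻¹
      set a : π.ker := μ.symm e with hadef
      set g : FreeGroup (Fin n) ⧸ N := f₂ j with hgdef
      have hcmem : g * (a : FreeGroup (Fin n) ⧸ N) * g⁻¹ ∈ π.ker :=
        (MonoidHom.normal_ker π).conj_mem _ a.2 g
      set c : π.ker := ⟨g * (a : FreeGroup (Fin n) ⧸ N) * g⁻¹, hcmem⟩ with hcdef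
      have hgoal : μ.symm ((jMulAut q J E j) e) = c := by
        rw [MulEquiv.symm_apply_eq]
        show (jMulAut q J E j) e = lamQ c
        -- compute lamQ c via representatives
        have hmemK : g.out * ((a : FreeGroup (Fin n) ⧸ N)).out * g.out⁻¹ ∈ f.ker :=
          (MonoidHom.normal_ker f).conj_mem _ (hmem_out a) g.out
        have hc2 : (QuotientGroup.mk (g.out * ((a : FreeGroup (Fin n) ⧸ N)).out * g.out⁻¹) :
            FreeGroup (Fin n) ⧸ N) = (c : FreeGroup (Fin n) ⧸ N) := by
          show (QuotientGroup.mk g.out * QuotientGroup.mk ((a : FreeGroup (Fin n) ⧸ N)).out *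
            (QuotientGroup.mk g.out)⁻¹ : FreeGroup (Fin n) ⧸ N) = _
          rw [QuotientGroup.out_eq', QuotientGroup.out_eq']
        have hc3 : lamQ c = lam ⟨g.out * ((a : FreeGroup (Fin n) ⧸ N)).out * g.out⁻¹, hmemK⟩ := by
          refine hcong _ _ ?_
          rw [QuotientGroup.out_eq', hc2]
        have hc4 := hlam_conj g.out ⟨((a : FreeGroup (Fin n) ⧸ N)).out, hmem_out a⟩ hmemK
        have hfg : f g.out = j := by
          have h5 : π (QuotientGroup.mk g.out) = f g.out := rfl
          rw [QuotientGroup.out_eq'] at h5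
          rw [← h5, hgdef]
          exact hπf₂ j
        have hlama : lam ⟨((a : FreeGroup (Fin n) ⧸ N)).out, hmem_out a⟩ = e := by
          show lamQ a = e
          rw [hadef]
          exact μ.apply_symm_apply e
        rw [hc3, hc4, hfg, hlama]
        rfl
      rw [hgoal]
    set χ : (Multiplicative E ⋊[jMulAut q J E] J) →* (FreeGroup (Fin n) ⧸ N) :=
      SemidirectProduct.lift f₁ f₂ hcompat with hχdef
    have hπχ : ∀ g, π (χ g) = g.right := by
      intro g
      conv_lhs => rw [← SemidirectProduct.inl_left_mul_inr_right g]
      rw [map_mul, map_mul, SemidirectProduct.lift_inl, SemidirectProduct.lift_inr]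
      rw [show π (f₁ g.left) = 1 from MonoidHom.mem_ker.mp (μ.symm g.left).2, one_mul]
      exact hπf₂ g.right
    have hχinj : Injective χ := by
      refine (injective_iff_map_eq_one χ).mpr ?_
      intro g hg
      have hr : g.right = 1 := by rw [← hπχ g, hg, map_one]
      have hg' : g = SemidirectProduct.inl g.left := sdp_eq_inl _ hr
      rw [hg', SemidirectProduct.lift_inl] at hg
      have h1 : μ.symm g.left = 1 := Subtype.ext hg
      have h2 : g.left = 1 := by
        have h3 := congrArg μ h1
        rwa [MulEquiv.apply_symm_apply, map_one] at h3
      rw [hg', h2, map_one]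
    have hχsurj : Surjective χ := by
      intro y
      obtain ⟨⟨a, h0⟩, hprod⟩ := hH.2 y
      refine ⟨SemidirectProduct.inl (μ ⟨(a : FreeGroup (Fin n) ⧸ N), a.2⟩) *
        SemidirectProduct.inr (νiso ⟨(h0 : FreeGroup (Fin n) ⧸ N), h0.2⟩), ?_⟩
      rw [map_mul, SemidirectProduct.lift_inl, SemidirectProduct.lift_inr]
      show ((μ.symm (μ ⟨(a : FreeGroup (Fin n) ⧸ N), a.2⟩)) : FreeGroup (Fin n) ⧸ N) *
        ((νiso.symm (νiso ⟨(h0 : FreeGroup (Fin n) ⧸ N), h0.2⟩)) : FreeGroup (Fin n) ⧸ N) = y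
      rw [MulEquiv.symm_apply_apply, MulEquiv.symm_apply_apply]
      exact hprod
    set Ψ : (Multiplicative E ⋊[jMulAut q J E] J) ≃* (FreeGroup (Fin n) ⧸ N) :=
      MulEquiv.ofBijective χ ⟨hχinj, hχsurj⟩ with hΨdef
    set ψF : FreeGroup (Fin n) →* (Multiplicative E ⋊[jMulAut q J E] J) :=
      Ψ.symm.toMonoidHom.comp (QuotientGroup.mk' N) with hψFdef
    have hψFsurj : Surjective ψF := Ψ.symm.surjective.comp (QuotientGroup.mk'_surjective N)
    have hcarry' : ∀ x : FreeGroup (Fin n), SemidirectProduct.rightHom (ψF x) = f x := by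
      intro x
      have h1 : π (χ (Ψ.symm (QuotientGroup.mk x))) = (Ψ.symm (QuotientGroup.mk x)).right :=
        hπχ _
      have h2 : χ (Ψ.symm (QuotientGroup.mk x)) = QuotientGroup.mk x :=
        Ψ.apply_symm_apply (QuotientGroup.mk x)
      rw [h2] at h1
      exact h1.symm
    have hRN : ∀ i, R i ∈ N := by
      intro i
      refine ⟨⟨R i, h i⟩, ?_, rfl⟩
      show Multiplicative.ofAdd (ℓ (θ ⟨R i, h i⟩).toAdd) = 1
      have hzero : ℓ (θ ⟨R i, h i⟩).toAdd = 0 := by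
        have hmem : (θ ⟨R i, h i⟩).toAdd ∈ LinearMap.ker ℓ :=
          hMle (Submodule.mem_sup_left (Submodule.subset_span ⟨i, rfl⟩))
        exact LinearMap.mem_ker.mp hmem
      rw [hzero]
      rfl
    have hnormal : Subgroup.normalClosure (Set.range R) ≤ ψF.ker := by
      apply Subgroup.normalClosure_le_normal
      rintro _ ⟨i, rfl⟩
      rw [SetLike.mem_coe, MonoidHom.mem_ker]
      show Ψ.symm (QuotientGroup.mk (R i)) = 1
      rw [(QuotientGroup.eq_one_iff _).mpr (hRN i), map_one]
    refine ⟨QuotientGroup.lift _ ψF hnormal, ?_, ?_⟩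
    · intro g
      obtain ⟨x, hx⟩ := hψFsurj g
      exact ⟨QuotientGroup.mk x, hx⟩
    · exact MonoidHom.ext fun x => hcarry' x
end

section
/- Let J be a finite group, let G be a group fitting in an extension 1 → A → G → J → 1 where A is a nontrivial free abelian group, and let q be a prime not dividing |J|. Then there exist an irreducible 𝔽_q[J]-module E and a surjective homomorphism G ↠ G_E onto a group G_E fitting in an extension 1 → E → G_E → J → 1 (with conjugation in G_E inducing the module action of J on E), such that the composition G ↠ G_E → J equals the given projection G → J. -/
open Function

set_option maxHeartbeats 2000000 in
/-- Let `J` be a finite group, `G` an extension `1 → A → G → J → 1` of `J` by a nontrivial free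
abelian group `A = ker π`, and `q` a prime not dividing `|J|`.  Then there are an irreducible
`𝔽_q[J]`-module `E` and a surjection from `G` onto a group `G_E` which is an extension
`1 → E → G_E → J → 1` in which conjugation induces the module action of `J` on `E`, compatibly
with the projections to `J`. -/
theorem exists_irreducible_quotient_extension
    (J : Type) [Group J] [Finite J] (G : Type*) [Group G]
    (π : G →* J) (hπ : Surjective π)
    (ι : Type*) [Nonempty ι]
    (hA : Nonempty ((π.ker : Subgroup G) ≃* Multiplicative (FreeAbelianGroup ι)))
    (q : ℕ) (hq : q.Prime) (hqJ : ¬ q ∣ Nat.card J) :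
    ∃ (E : Type) (_ : AddCommGroup E) (_ : Module (MonoidAlgebra (ZMod q) J) E),
      IsSimpleModule (MonoidAlgebra (ZMod q) J) E ∧
      ∃ (GE : Type) (_ : Group GE) (ιE : Multiplicative E →* GE) (πE : GE →* J) (ψ : G →* GE),
        Injective ιE ∧ Surjective πE ∧ ιE.range = πE.ker ∧
        (∀ (g : GE) (e : E),
          g * ιE (Multiplicative.ofAdd e) * g⁻¹ =
            ιE (Multiplicative.ofAdd (MonoidAlgebra.of (ZMod q) J (πE g) • e))) ∧
        Surjective ψ ∧ πE.comp ψ = π := by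
  classical
  haveI : Fact q.Prime := ⟨hq⟩
  haveI : NeZero q := ⟨hq.ne_zero⟩
  haveI : Fact (1 < q) := ⟨hq.one_lt⟩
  cases nonempty_fintype J
  haveI : NeZero ((Fintype.card J : ZMod q)) := by
    constructor
    rw [Ne, ZMod.natCast_eq_zero_iff]
    rwa [Nat.card_eq_fintype_card] at hqJ
  obtain ⟨e⟩ := hA
  letI : CommGroup ↥π.ker :=
    { (inferInstance : Group ↥π.ker) with
      mul_comm := fun a b => e.injective (by rw [map_mul, map_mul, mul_comm]) }
  -- The `𝔽_q`-vector space `M = 𝔽_q ⊗ A`.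
  let A' : Type _ := Additive ↥π.ker
  let M : Type _ := TensorProduct ℤ (ZMod q) A'
  -- conjugation action of `G` on `A` and on `M`
  let cj : G → (A' →ₗ[ℤ] A') := fun g =>
    (MonoidHom.toAdditive ((MulAut.conjNormal g : MulAut ↥π.ker) : ↥π.ker →* ↥π.ker)).toIntLinearMap
  have hcj : ∀ (g : G) (a : ↥π.ker),
      cj g (Additive.ofMul a) = Additive.ofMul (MulAut.conjNormal g a) := fun g a => rfl
  let L : G → Module.End (ZMod q) M := fun g => (cj g).baseChange (ZMod q)
  have hL_tmul : ∀ (g : G) (c : ZMod q) (a : A'), L g (c ⊗ₜ[ℤ] a) = c ⊗ₜ[ℤ] (cj g a) :=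
    fun g c a => LinearMap.baseChange_tmul _ _ _
  have hcj_mul : ∀ (g h : G) (a : A'), cj (g * h) a = cj g (cj h a) := by
    intro g h a
    show Additive.ofMul (MulAut.conjNormal (g * h) a.toMul)
        = Additive.ofMul (MulAut.conjNormal g ((MulAut.conjNormal h) a.toMul))
    rw [map_mul, MulAut.mul_apply]
  have hcj_one : ∀ a : A', cj (1 : G) a = a := by
    intro a
    show Additive.ofMul (MulAut.conjNormal (1 : G) a.toMul) = a
    rw [map_one]
    rfl
  have hcj_ker : ∀ (a : ↥π.ker) (b : A'), cj (a : G) b = b := by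
    intro a b
    show Additive.ofMul (MulAut.conjNormal ((a : ↥π.ker) : G) b.toMul) = b
    rw [MulAut.conjNormal_val, MulAut.conj_apply, mul_comm a b.toMul, mul_inv_cancel_right]
    rfl
  have hL_mul : ∀ g h, L (g * h) = L g * L h := by
    intro g h
    apply LinearMap.ext
    intro x
    induction x using TensorProduct.induction_on with
    | zero => simp
    | tmul c a => rw [hL_tmul, Module.End.mul_apply, hL_tmul, hL_tmul, hcj_mul]
    | add x y hx hy => simp only [map_add, hx, hy]
  have hL_one : L 1 = 1 := by
    apply LinearMap.ext
    intro x
    induction x using TensorProduct.induction_on with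
    | zero => simp
    | tmul c a => rw [hL_tmul, Module.End.one_apply, hcj_one]
    | add x y hx hy =>
        simp only [map_add, Module.End.one_apply] at hx hy ⊢
        rw [hx, hy]
  have hL_ker : ∀ a : ↥π.ker, L (a : G) = 1 := by
    intro a
    apply LinearMap.ext
    intro x
    induction x using TensorProduct.induction_on with
    | zero => simp
    | tmul c b => rw [hL_tmul, Module.End.one_apply, hcj_ker]
    | add x y hx hy =>
        simp only [map_add, Module.End.one_apply] at hx hy ⊢
        rw [hx, hy]
  -- package as a homomorphism to units and descend to `J`
  let σ : G →* (Module.End (ZMod q) M)ˣ :=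
    { toFun := fun g => ⟨L g, L g⁻¹,
        by rw [← hL_mul, mul_inv_cancel, hL_one], by rw [← hL_mul, inv_mul_cancel, hL_one]⟩
      map_one' := Units.ext (by simpa using hL_one)
      map_mul' := fun g h => Units.ext (by simpa using hL_mul g h) }
  have hσker : π.ker ≤ σ.ker := by
    intro a ha
    have : σ a = 1 := by
      apply Units.ext
      show L a = ((1 : (Module.End (ZMod q) M)ˣ) : Module.End (ZMod q) M)
      rw [Units.val_one]
      exact hL_ker ⟨a, ha⟩
    exact this
  let ρ : Representation (ZMod q) J M :=
    (Units.coeHom (Module.End (ZMod q) M)).comp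
      ((π.liftOfRightInverse (surjInv hπ) (rightInverse_surjInv hπ)) ⟨σ, hσker⟩)
  have hρ : ∀ g : G, ρ (π g) = L g := by
    intro g
    show (((π.liftOfRightInverse (surjInv hπ) (rightInverse_surjInv hπ)) ⟨σ, hσker⟩) (π g) :
        Module.End (ZMod q) M) = L g
    rw [MonoidHom.liftOfRightInverse_comp_apply]
    rfl
  -- nontriviality of M
  have hMnt : Nontrivial M := by
    let lift1 : FreeAbelianGroup ι →+ ℤ := FreeAbelianGroup.lift (fun _ => (1 : ℤ))
    let χ : A' →+ ZMod q :=
      AddMonoidHom.mk' (fun a => ((lift1 (e a.toMul).toAdd : ℤ) : ZMod q))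
        (by
          intro a b
          show ((lift1 (e (a.toMul * b.toMul)).toAdd : ℤ) : ZMod q) = _
          rw [map_mul]
          show ((lift1 ((e a.toMul).toAdd + (e b.toMul).toAdd) : ℤ) : ZMod q) = _
          rw [map_add, Int.cast_add])
    let bil : ZMod q →ₗ[ℤ] (A' →ₗ[ℤ] ZMod q) :=
      { toFun := fun c => c • χ.toIntLinearMap
        map_add' := fun c c' => add_smul c c' _
        map_smul' := fun n c => smul_assoc n c _ }
    let θ : M →ₗ[ℤ] ZMod q := TensorProduct.lift bil
    obtain ⟨i⟩ := ‹Nonempty ι›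
    let a₀ : A' := Additive.ofMul (e.symm (Multiplicative.ofAdd (FreeAbelianGroup.of i)))
    refine ⟨(1 : ZMod q) ⊗ₜ[ℤ] a₀, 0, fun h => ?_⟩
    have h1 : θ ((1 : ZMod q) ⊗ₜ[ℤ] a₀) = 1 := by
      show (1 : ZMod q) • χ.toIntLinearMap a₀ = 1
      rw [one_smul]
      show ((lift1 (e (e.symm (Multiplicative.ofAdd (FreeAbelianGroup.of i)))).toAdd : ℤ) :
        ZMod q) = 1
      rw [MulEquiv.apply_symm_apply]
      show ((lift1 (FreeAbelianGroup.of i) : ℤ) : ZMod q) = 1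
      rw [FreeAbelianGroup.lift_apply_of]
      exact Int.cast_one
    rw [h, map_zero] at h1
    exact zero_ne_one h1
  -- the semisimple group algebra
  haveI : IsSemisimpleRing (MonoidAlgebra (ZMod q) J) := by
    haveI : NeZero ((Nat.card J : ZMod q)) := by rw [Nat.card_eq_fintype_card]; infer_instance
    infer_instance
  -- `M` as a module over the group algebra
  let MM : Type _ := ρ.asModule
  haveI : Nontrivial MM := ρ.asModuleEquiv.toEquiv.nontrivial
  -- a maximal submodule and the simple quotient
  obtain ⟨N, hN⟩ := IsCoatomic.exists_coatom (α := Submodule (MonoidAlgebra (ZMod q) J) MM)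
  let E₀ : Type _ := MM ⧸ N
  haveI hE₀ : IsSimpleModule (MonoidAlgebra (ZMod q) J) (MM ⧸ N) :=
    isSimpleModule_iff_isCoatom.mpr hN
  haveI hE₀' : IsSimpleModule (MonoidAlgebra (ZMod q) J) E₀ := hE₀
  haveI : Nontrivial E₀ := IsSimpleModule.nontrivial (MonoidAlgebra (ZMod q) J) E₀
  obtain ⟨x₀, hx₀⟩ := exists_ne (0 : E₀)
  let ℓ : MonoidAlgebra (ZMod q) J →ₗ[MonoidAlgebra (ZMod q) J] E₀ :=
    LinearMap.toSpanSingleton _ _ x₀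
  have hℓ : Surjective ℓ := IsSimpleModule.toSpanSingleton_surjective _ hx₀
  let E : Type := MonoidAlgebra (ZMod q) J ⧸ LinearMap.ker ℓ
  let φ : E ≃ₗ[MonoidAlgebra (ZMod q) J] E₀ := ℓ.quotKerEquivOfSurjective hℓ
  haveI hEsimple : IsSimpleModule (MonoidAlgebra (ZMod q) J) E := IsSimpleModule.congr φ
  -- the map `A → E`
  let mu : A' →+ M :=
    AddMonoidHom.mk' (fun a => (1 : ZMod q) ⊗ₜ[ℤ] a) (fun a b => TensorProduct.tmul_add _ _ _)
  let mu' : A' →+ MM := (ρ.asModuleEquiv.symm : M ≃+ MM).toAddMonoidHom.comp mu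
  have hmu'surj : Surjective mu' := by
    intro y
    have : ∀ x : M, ∃ a : A', (1 : ZMod q) ⊗ₜ[ℤ] a = x := by
      intro x
      induction x using TensorProduct.induction_on with
      | zero => exact ⟨0, TensorProduct.tmul_zero _ _⟩
      | tmul c a =>
          obtain ⟨n, rfl⟩ := ZMod.intCast_surjective c
          refine ⟨n • a, ?_⟩
          rw [← TensorProduct.smul_tmul]
          congr 1
          rw [zsmul_eq_mul, mul_one]
      | add x y hx hy =>
          obtain ⟨a, ha⟩ := hx
          obtain ⟨b, hb⟩ := hy
          exact ⟨a + b, by rw [TensorProduct.tmul_add, ha, hb]⟩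
    obtain ⟨a, ha⟩ := this (ρ.asModuleEquiv y)
    exact ⟨a, by simp [mu', mu, ha]⟩
  have hmu'equiv : ∀ (g : G) (a : ↥π.ker),
      mu' (Additive.ofMul (MulAut.conjNormal g a)) =
        MonoidAlgebra.of (ZMod q) J (π g) • mu' (Additive.ofMul a) := by
    intro g a
    show ρ.asModuleEquiv.symm ((1 : ZMod q) ⊗ₜ[ℤ] Additive.ofMul (MulAut.conjNormal g a)) = _
    rw [← hcj, ← hL_tmul, ← hρ, Representation.asModuleEquiv_symm_map_rho]
    rfl
  let P : MM →ₗ[MonoidAlgebra (ZMod q) J] E := φ.symm.toLinearMap.comp N.mkQ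
  have hPsurj : Surjective P := φ.symm.surjective.comp (Submodule.mkQ_surjective N)
  let τ : A' →+ E := P.toAddMonoidHom.comp mu'
  have hτsurj : Surjective τ := hPsurj.comp hmu'surj
  have hτequiv : ∀ (g : G) (a : ↥π.ker),
      τ (Additive.ofMul (MulAut.conjNormal g a)) =
        MonoidAlgebra.of (ZMod q) J (π g) • τ (Additive.ofMul a) := by
    intro g a
    show P (mu' (Additive.ofMul (MulAut.conjNormal g a))) = _
    rw [hmu'equiv, map_smul]
    rfl
  -- multiplicative version
  let τm : ↥π.ker →* Multiplicative E :=
    { toFun := fun a => Multiplicative.ofAdd (τ (Additive.ofMul a))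
      map_one' := by
        show Multiplicative.ofAdd (τ 0) = 1
        rw [map_zero]; rfl
      map_mul' := fun a b => by
        show Multiplicative.ofAdd (τ (Additive.ofMul a + Additive.ofMul b)) = _
        rw [map_add]; rfl }
  have hτmsurj : Surjective τm := by
    intro x
    obtain ⟨a, ha⟩ := hτsurj x.toAdd
    exact ⟨a, by show Multiplicative.ofAdd (τ a) = x; rw [ha]; rfl⟩
  -- the kernel subgroup `K ≤ G`
  let K : Subgroup G := τm.ker.map π.ker.subtype
  have hKle : K ≤ π.ker := Subgroup.map_subtype_le _
  haveI hKnormal : K.Normal := by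
    constructor
    rintro k ⟨a, ha, rfl⟩ g
    refine ⟨MulAut.conjNormal g a, ?_, MulAut.conjNormal_apply g a⟩
    show τm (MulAut.conjNormal g a) = 1
    show Multiplicative.ofAdd (τ (Additive.ofMul (MulAut.conjNormal g a))) = 1
    have ha' : τ (Additive.ofMul a) = 0 := ha
    rw [hτequiv, ha', smul_zero]
    rfl
  -- the quotient group
  let GE₀ : Type _ := G ⧸ K
  let ψ₀ : G →* GE₀ := QuotientGroup.mk' K
  have hψ₀surj : Surjective ψ₀ := QuotientGroup.mk'_surjective K
  let πE₀ : GE₀ →* J := QuotientGroup.lift K π (fun g hg => MonoidHom.mem_ker.mp (hKle hg))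
  have hπE₀ψ₀ : ∀ g : G, πE₀ (ψ₀ g) = π g := fun g => rfl
  have hπE₀surj : Surjective πE₀ := fun j => by
    obtain ⟨g, rfl⟩ := hπ j
    exact ⟨ψ₀ g, rfl⟩
  have hle : τm.ker ≤ (ψ₀.comp π.ker.subtype).ker := by
    intro a ha
    show ψ₀ (a : G) = 1
    rw [show ψ₀ (a : G) = ((a : G) : G ⧸ K) from rfl, QuotientGroup.eq_one_iff]
    exact ⟨a, ha, rfl⟩
  let ιE₀ : Multiplicative E →* GE₀ :=
    (τm.liftOfRightInverse (surjInv hτmsurj) (rightInverse_surjInv hτmsurj))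
      ⟨ψ₀.comp π.ker.subtype, hle⟩
  have hcomp : ∀ a : ↥π.ker, ιE₀ (τm a) = ψ₀ (a : G) := fun a => by
    rw [MonoidHom.liftOfRightInverse_comp_apply]
    rfl
  have hιE₀inj : Injective ιE₀ := by
    rw [injective_iff_map_eq_one]
    intro x hx
    obtain ⟨a, rfl⟩ := hτmsurj x
    rw [hcomp] at hx
    have : (a : G) ∈ K := by
      rwa [show ψ₀ (a : G) = ((a : G) : G ⧸ K) from rfl, QuotientGroup.eq_one_iff] at hx
    obtain ⟨b, hb, hba⟩ := this
    have : b = a := Subtype.ext hba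
    rw [← this]
    exact hb
  have hrk₀ : ιE₀.range = πE₀.ker := by
    ext x
    constructor
    · rintro ⟨y, rfl⟩
      obtain ⟨a, rfl⟩ := hτmsurj y
      rw [hcomp]
      show πE₀ (ψ₀ (a : G)) = 1
      rw [hπE₀ψ₀]
      exact MonoidHom.mem_ker.mp a.2
    · intro hx
      obtain ⟨g, rfl⟩ := hψ₀surj x
      have hg : g ∈ π.ker := by
        rw [MonoidHom.mem_ker] at hx ⊢
        rwa [hπE₀ψ₀] at hx
      exact ⟨τm ⟨g, hg⟩, by rw [hcomp]⟩
  have hconj₀ : ∀ (g : G) (a : ↥π.ker),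
      ψ₀ g * ιE₀ (τm a) * (ψ₀ g)⁻¹ =
        ιE₀ (Multiplicative.ofAdd
          (MonoidAlgebra.of (ZMod q) J (π g) • (τ (Additive.ofMul a)))) := by
    intro g a
    rw [hcomp, ← hτequiv]
    have : Multiplicative.ofAdd (τ (Additive.ofMul (MulAut.conjNormal g a))) =
        τm (MulAut.conjNormal g a) := rfl
    rw [this, hcomp]
    rw [← map_inv, ← map_mul, ← map_mul]
    congr 1
  -- finiteness, to shrink the universe
  haveI : Finite (MonoidAlgebra (ZMod q) J) :=
    Finite.of_equiv (J → ZMod q) ((Finsupp.equivFunOnFinite (α := J) (M := ZMod q)).symm.trans MonoidAlgebra.coeffEquiv.symm)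
  haveI : Finite E := Finite.of_surjective _ (Submodule.mkQ_surjective (LinearMap.ker ℓ))
  haveI : Finite (Multiplicative E) := Finite.of_equiv E Multiplicative.ofAdd
  haveI : Finite ↥ιE₀.range := Finite.of_surjective
    (fun x => (⟨ιE₀ x, ⟨x, rfl⟩⟩ : ↥ιE₀.range))
    (by rintro ⟨y, x, rfl⟩; exact ⟨x, rfl⟩)
  haveI : Finite ↥πE₀.ker := by rw [← hrk₀]; infer_instance
  haveI : Finite (GE₀ ⧸ πE₀.ker) :=
    Finite.of_equiv J (QuotientGroup.quotientKerEquivOfSurjective πE₀ hπE₀surj).toEquiv.symm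
  haveI : Finite GE₀ :=
    Finite.of_equiv _ (Subgroup.groupEquivQuotientProdSubgroup (s := πE₀.ker)).symm
  -- shrink
  let GE : Type := Shrink GE₀
  let se : GE ≃* GE₀ := Shrink.mulEquiv
  let ιE : Multiplicative E →* GE := se.symm.toMonoidHom.comp ιE₀
  let πE : GE →* J := πE₀.comp se.toMonoidHom
  let ψ : G →* GE := se.symm.toMonoidHom.comp ψ₀
  refine ⟨E, inferInstance, inferInstance, hEsimple, GE, inferInstance, ιE, πE, ψ,
    se.symm.injective.comp hιE₀inj, hπE₀surj.comp se.surjective, ?_, ?_, ?_, ?_⟩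
  · ext x
    rw [MonoidHom.mem_ker]
    constructor
    · rintro ⟨y, rfl⟩
      show πE₀ (se (se.symm (ιE₀ y))) = 1
      rw [MulEquiv.apply_symm_apply]
      have : ιE₀ y ∈ πE₀.ker := hrk₀ ▸ ⟨y, rfl⟩
      exact this
    · intro hx
      have hx' : se x ∈ πE₀.ker := hx
      rw [← hrk₀] at hx'
      obtain ⟨y, hy⟩ := hx'
      refine ⟨y, ?_⟩
      show se.symm (ιE₀ y) = x
      rw [hy, MulEquiv.symm_apply_apply]
  · intro g ee
    obtain ⟨g', hg'⟩ := hψ₀surj (se g)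
    obtain ⟨a, ha⟩ := hτsurj ee
    have hgrw : g = se.symm (ψ₀ g') := by rw [hg', MulEquiv.symm_apply_apply]
    have hπEg : πE g = π g' := by
      show πE₀ (se g) = π g'
      rw [← hg', hπE₀ψ₀]
    rw [hπEg, hgrw, ← ha]
    show se.symm (ψ₀ g') * se.symm (ιE₀ (Multiplicative.ofAdd (τ (Additive.ofMul a)))) *
        (se.symm (ψ₀ g'))⁻¹ = se.symm (ιE₀ (Multiplicative.ofAdd
          (MonoidAlgebra.of (ZMod q) J (π g') • τ (Additive.ofMul a))))
    rw [← map_inv, ← map_mul, ← map_mul]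
    congr 1
    exact hconj₀ g' a
  · exact se.symm.surjective.comp hψ₀surj
  · ext g
    show πE₀ (se (se.symm (ψ₀ g))) = π g
    rw [MulEquiv.apply_symm_apply]
    rfl
end

section
/- Let Q be a group with a normal subgroup N of finite index d such that there exists a surjective homomorphism N ↠ ℤ. Then there exists a homomorphism from Q to the wreath product ℤ ≀ (Q/N) = ℤ^{Q/N} ⋊ (Q/N) whose image is infinite; in particular Q admits a surjection onto an infinite group having an abelian normal subgroup of index at most d. -/
open Function

/-- The wreath product `ℤ ≀ Γ` of `ℤ` by a group `Γ`: the semidirect product of the group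
`ℤ^Γ = Γ → ℤ` of functions from `Γ` to `ℤ` (written multiplicatively), on which `Γ` acts by
permuting the coordinates (via left translation on `Γ`), with `Γ`. -/
def WreathZ (Γ : Type*) [Group Γ] : Type _ :=
  (Γ → Multiplicative ℤ) ⋊[mulAutArrow (G := Γ) (A := Γ) (M := Multiplicative ℤ)] Γ

noncomputable instance (Γ : Type*) [Group Γ] : Group (WreathZ Γ) :=
  inferInstanceAs (Group ((Γ → Multiplicative ℤ) ⋊[_] Γ))

section Aux

variable {Q : Type*} [Group Q] (N : Subgroup Q) [N.Normal]

lemma wreath_mem_aux (g : Q) (x : Q ⧸ N) :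
    (x.out)⁻¹ * g * (((QuotientGroup.mk g : Q ⧸ N))⁻¹ * x).out ∈ N := by
  rw [← QuotientGroup.eq_one_iff]
  have h1 : (QuotientGroup.mk ((x.out) : Q) : Q ⧸ N) = x := Quotient.out_eq' x
  have h2 : (QuotientGroup.mk ((((QuotientGroup.mk g : Q ⧸ N))⁻¹ * x).out : Q) : Q ⧸ N)
      = ((QuotientGroup.mk g : Q ⧸ N))⁻¹ * x := Quotient.out_eq' _
  have : (QuotientGroup.mk ((x.out)⁻¹ * g * (((QuotientGroup.mk g : Q ⧸ N))⁻¹ * x).out) : Q ⧸ N)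
      = (QuotientGroup.mk (x.out : Q))⁻¹ * QuotientGroup.mk g *
        QuotientGroup.mk ((((QuotientGroup.mk g : Q ⧸ N))⁻¹ * x).out : Q) := by
    simp [QuotientGroup.mk_mul, QuotientGroup.mk_inv]
  rw [this, h1, h2]
  group

/-- The cocycle part of the homomorphism to the wreath product. -/
noncomputable def wreathFun (ν : N →* Multiplicative ℤ) (g : Q) :
    (Q ⧸ N) → Multiplicative ℤ :=
  fun x => ν ⟨(x.out)⁻¹ * g * (((QuotientGroup.mk g : Q ⧸ N))⁻¹ * x).out,
    wreath_mem_aux N g x⟩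

/-- The natural homomorphism `Q → ℤ ≀ (Q/N)` induced by `ν : N → ℤ`. -/
noncomputable def wreathHom (ν : N →* Multiplicative ℤ) : Q →* WreathZ (Q ⧸ N) where
  toFun g := (⟨wreathFun N ν g, QuotientGroup.mk g⟩ :
    (Q ⧸ N → Multiplicative ℤ) ⋊[mulAutArrow] (Q ⧸ N))
  map_one' := by
    refine SemidirectProduct.ext (funext fun x => ?_) (by simp; rfl)
    show ν _ = (1 : Q ⧸ N → Multiplicative ℤ) x
    have : ((x.out)⁻¹ * 1 * (((QuotientGroup.mk (1 : Q) : Q ⧸ N))⁻¹ * x).out : Q) = 1 := by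
      have : ((QuotientGroup.mk (1 : Q) : Q ⧸ N))⁻¹ * x = x := by simp
      rw [this]; group
    have h2 : (⟨_, wreath_mem_aux N (1 : Q) x⟩ : N) = 1 := Subtype.ext this
    rw [h2, map_one]; rfl
  map_mul' := by
    intro g h
    refine SemidirectProduct.ext (funext fun x => ?_) ?_
    · show wreathFun N ν (g * h) x
        = wreathFun N ν g x * (mulAutArrow (QuotientGroup.mk g) (wreathFun N ν h)) x
      have hact : (mulAutArrow (G := Q ⧸ N) (A := Q ⧸ N) (M := Multiplicative ℤ)
          (QuotientGroup.mk g) (wreathFun N ν h)) x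
          = wreathFun N ν h (((QuotientGroup.mk g : Q ⧸ N))⁻¹ * x) := rfl
      rw [hact]
      show ν _ = ν _ * ν _
      rw [← map_mul]
      congr 1
      apply Subtype.ext
      show ((x.out)⁻¹ * (g * h) * (((QuotientGroup.mk (g * h) : Q ⧸ N))⁻¹ * x).out : Q) = _
      have harg : ((QuotientGroup.mk (g * h) : Q ⧸ N))⁻¹ * x
          = ((QuotientGroup.mk h : Q ⧸ N))⁻¹ * (((QuotientGroup.mk g : Q ⧸ N))⁻¹ * x) := by
        rw [QuotientGroup.mk_mul]; group
      rw [harg]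
      show _ = ((x.out)⁻¹ * g * (((QuotientGroup.mk g : Q ⧸ N))⁻¹ * x).out) *
        (((((QuotientGroup.mk g : Q ⧸ N))⁻¹ * x).out)⁻¹ * h *
          (((QuotientGroup.mk h : Q ⧸ N))⁻¹ * (((QuotientGroup.mk g : Q ⧸ N))⁻¹ * x)).out)
      group
    · show (QuotientGroup.mk (g * h) : Q ⧸ N) = QuotientGroup.mk g * QuotientGroup.mk h
      simp

lemma wreathHom_left (ν : N →* Multiplicative ℤ) (g : Q) :
    (SemidirectProduct.left (wreathHom N ν g : (Q ⧸ N → Multiplicative ℤ) ⋊[mulAutArrow] (Q ⧸ N)))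
      = wreathFun N ν g := rfl

end Aux

/-- Let `Q` be a group with a normal subgroup `N` of finite index `d` admitting a surjection
onto `ℤ`.  Then there is a homomorphism from `Q` to the wreath product `ℤ ≀ (Q/N)` with
infinite image; in particular `Q` surjects onto an infinite group having an abelian normal
subgroup of index at most `d`. -/
theorem exists_hom_to_wreath_with_infinite_image
    (Q : Type*) [Group Q] (N : Subgroup Q) [N.Normal] (d : ℕ) (hd : N.index = d)
    (hd0 : d ≠ 0) (ν : N →* Multiplicative ℤ) (hν : Surjective ν) :
    (∃ ψ : Q →* WreathZ (Q ⧸ N), Infinite ψ.range) ∧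
    ∃ (G' : Type) (_ : Group G') (σ : Q →* G'),
      Surjective σ ∧ Infinite G' ∧
      ∃ B : Subgroup G', B.Normal ∧ IsMulCommutative B ∧ 0 < B.index ∧ B.index ≤ d := by
  classical
  set Γ := Q ⧸ N with hΓ
  have hfin : Finite Γ := by
    have : N.index ≠ 0 := by rw [hd]; exact hd0
    rw [Subgroup.index_eq_card] at this
    exact (Nat.card_ne_zero.mp this).2
  set ψ : Q →* WreathZ Γ := wreathHom N ν with hψ
  -- the injection `ℤ → ψ.range`
  have key : ∀ m : Multiplicative ℤ, ∃ g : Q, wreathFun N ν g 1 = m := by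
    intro m
    obtain ⟨k, hk⟩ := hν m
    refine ⟨((1 : Γ).out) * (k : Q) * ((1 : Γ).out)⁻¹, ?_⟩
    have hmkk : (QuotientGroup.mk (k : Q) : Γ) = 1 := by
      rw [QuotientGroup.eq_one_iff]; exact k.2
    have hmk : (QuotientGroup.mk (((1 : Γ).out) * (k : Q) * ((1 : Γ).out)⁻¹ : Q) : Γ)⁻¹ * 1
        = (1 : Γ) := by
      have h1 : (QuotientGroup.mk (((1 : Γ).out : Q)) : Γ) = 1 := Quotient.out_eq _
      simp [QuotientGroup.mk_mul, QuotientGroup.mk_inv, hmkk, h1]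
    show ν _ = m
    rw [← hk]
    congr 1
    apply Subtype.ext
    show (((1 : Γ).out)⁻¹ * (((1 : Γ).out) * (k : Q) * ((1 : Γ).out)⁻¹) * _ : Q) = (k : Q)
    rw [hmk]
    group
  have hinf : Infinite ψ.range := by
    choose gg hgg using key
    refine Infinite.of_injective
      (fun m : Multiplicative ℤ => (⟨ψ (gg m), ⟨gg m, rfl⟩⟩ : ψ.range)) ?_
    intro m₁ m₂ h
    have h2 : (ψ (gg m₁)) = (ψ (gg m₂)) := congrArg Subtype.val h
    have h3 : wreathFun N ν (gg m₁) 1 = wreathFun N ν (gg m₂) 1 := by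
      have := congrArg (fun z : WreathZ Γ =>
        (SemidirectProduct.left (z : (Γ → Multiplicative ℤ) ⋊[mulAutArrow] Γ)) 1) h2
      exact this
    rw [hgg m₁, hgg m₂] at h3
    exact h3
  refine ⟨⟨ψ, hinf⟩, ?_⟩
  -- second part: shrink the range to `Type 0`
  have hsmallW : Small.{0} (WreathZ Γ) := by
    refine small_of_injective (β := (Γ → Multiplicative ℤ) × Γ)
      (f := fun z => ((z : (Γ → Multiplicative ℤ) ⋊[mulAutArrow] Γ).left,
        (z : (Γ → Multiplicative ℤ) ⋊[mulAutArrow] Γ).right)) ?_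
    intro a b hab
    exact SemidirectProduct.ext (congrArg Prod.fst hab) (congrArg Prod.snd hab)
  have hsmall : Small.{0} ψ.range :=
    small_of_injective (f := fun z : ψ.range => (z : WreathZ Γ)) Subtype.val_injective
  refine ⟨Shrink ψ.range, inferInstance, ?_⟩
  set e : Shrink ψ.range ≃* ψ.range := Shrink.mulEquiv
  set σ : Q →* Shrink ψ.range := e.symm.toMonoidHom.comp ψ.rangeRestrict with hσ
  have hσsurj : Surjective σ := e.symm.surjective.comp ψ.rangeRestrict_surjective
  have hinfG : Infinite (Shrink ψ.range) := Infinite.of_injective e.symm e.symm.injective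
  refine ⟨σ, hσsurj, hinfG, ?_⟩
  -- the abelian normal subgroup
  set ι : Shrink ψ.range →* WreathZ Γ := ψ.range.subtype.comp e.toMonoidHom with hι
  have hιinj : Injective ι := ψ.range.subtype_injective.comp e.injective
  set rh : WreathZ Γ →* Γ :=
    (SemidirectProduct.rightHom : (Γ → Multiplicative ℤ) ⋊[mulAutArrow] Γ →* Γ) with hrh
  set χ : Shrink ψ.range →* Γ := rh.comp ι with hχ
  refine ⟨χ.ker, inferInstance, ?_, ?_, ?_⟩
  · refine ⟨⟨fun a b => ?_⟩⟩
    apply Subtype.ext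
    apply hιinj
    rw [Subgroup.coe_mul, Subgroup.coe_mul, map_mul, map_mul]
    have ha : (ι (a : Shrink ψ.range) :
        (Γ → Multiplicative ℤ) ⋊[mulAutArrow] Γ).right = 1 := a.2
    have hb : (ι (b : Shrink ψ.range) :
        (Γ → Multiplicative ℤ) ⋊[mulAutArrow] Γ).right = 1 := b.2
    refine SemidirectProduct.ext ?_ ?_
    · show (HMul.hMul (α := (Γ → Multiplicative ℤ) ⋊[mulAutArrow] Γ) (β := (Γ → Multiplicative ℤ) ⋊[mulAutArrow] Γ) (γ := (Γ → Multiplicative ℤ) ⋊[mulAutArrow] Γ) (ι (a : Shrink ψ.range) : (Γ → Multiplicative ℤ) ⋊[mulAutArrow] Γ) (ι (b : Shrink ψ.range) : (Γ → Multiplicative ℤ) ⋊[mulAutArrow] Γ)).left = (HMul.hMul (α := (Γ → Multiplicative ℤ) ⋊[mulAutArrow] Γ) (β := (Γ → Multiplicative ℤ) ⋊[mulAutArrow] Γ) (γ := (Γ → Multiplicative ℤ) ⋊[mulAutArrow] Γ) (ι (b : Shrink ψ.range) : (Γ → Multiplicative ℤ) ⋊[mulAutArrow] Γ) (ι (a :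 Shrink ψ.range) : (Γ → Multiplicative ℤ) ⋊[mulAutArrow] Γ)).left
      erw [SemidirectProduct.mul_left, SemidirectProduct.mul_left, ha, hb, map_one,
        MulAut.one_apply, MulAut.one_apply]
      exact mul_comm _ _
    · show (HMul.hMul (α := (Γ → Multiplicative ℤ) ⋊[mulAutArrow] Γ) (β := (Γ → Multiplicative ℤ) ⋊[mulAutArrow] Γ) (γ := (Γ → Multiplicative ℤ) ⋊[mulAutArrow] Γ) (ι (a : Shrink ψ.range) : (Γ → Multiplicative ℤ) ⋊[mulAutArrow] Γ) (ι (b : Shrink ψ.range) : (Γ → Multiplicative ℤ) ⋊[mulAutArrow] Γ)).right = (HMul.hMul (α := (Γ → Multiplicative ℤ) ⋊[mulAutArrow] Γ) (β := (Γ → Multiplicative ℤ) ⋊[mulAutArrow] Γ) (γ := (Γ → Multiplicative ℤ) ⋊[mulAutArrow] Γ) (ι (b : Shrink ψ.range) : (Γ → Multiplicative ℤ) ⋊[mulAutArrow] Γ) (ι (a : Shrink ψ.range) : (Γ → Multiplicative ℤ) ⋊[mulAutArrow] Γ)).right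
      erw [SemidirectProduct.mul_right, SemidirectProduct.mul_right, ha, hb]
  · have : Finite χ.range := Subtype.finite
    have : Nonempty χ.range := ⟨1⟩
    rw [Subgroup.index_ker]
    exact Nat.card_pos
  · rw [Subgroup.index_ker]
    calc Nat.card χ.range ≤ Nat.card Γ :=
          Nat.card_le_card_of_injective _ Subtype.val_injective
    _ = d := by rw [← Subgroup.index_eq_card, hd]
end
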